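/- arXiv:1808.09404 — 8 statements merged into one kernel-verified Lean document; each statement's English description precedes it below -/
import Mathlib

section
/- Let ν be a weight satisfying property (U), i.e. there exist α > 0 and C_ν > 0 such that for every f ∈ H^∞_ν and every z ∈ 𝔻, |f'(z)| ≤ C_ν ‖f‖_{H^∞_ν} / (ν(z)(1−|z|²)). Let μ be any weight. If sup_{0≤t<1} sup_{0≤θ<2π} μ(t) ∫₀ᵗ |g(r e^{iθ})| / ((1−r²) ν(r)) dr < ∞, then the operator S_g f(z) = ∫₀ᶻ f'(ω) g(ω) dω is bounded from H^∞_ν to H^∞_μ. -/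
open Complex Metric Set Filter Real MeasureTheory intervalIntegral

noncomputable section

def IsWeight (ν : ℂ → ℝ) : Prop :=
  ContinuousOn ν (Metric.ball (0:ℂ) 1) ∧
  (∀ z ∈ Metric.ball (0:ℂ) 1, 0 ≤ ν z) ∧
  (∀ z : ℂ, ν z = ν ((‖z‖ : ℝ) : ℂ)) ∧
  (∀ r s : ℝ, 0 ≤ r → r ≤ s → s < 1 → ν ((s:ℝ) : ℂ) ≤ ν ((r:ℝ) : ℂ))


/-- The companion Volterra operator `S_g f (z) = ∫₀ᶻ f'(ω) g(ω) dω`. -/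
def Sg (g f : ℂ → ℂ) (z : ℂ) : ℂ :=
  z * ∫ t in (0:ℝ)..1, deriv f ((t:ℂ) * z) * g ((t:ℂ) * z)

lemma coe_mem_ball (r : ℝ) (h0 : 0 ≤ r) (h1 : r < 1) : ((r:ℝ):ℂ) ∈ Metric.ball (0:ℂ) 1 := by
  simp only [Metric.mem_ball, dist_zero_right, Complex.norm_real, Real.norm_eq_abs,
    _root_.abs_of_nonneg h0]
  exact h1

lemma mem_ball_aux (r : ℝ) (θ : ℝ) (hr : 0 ≤ r) (hr1 : r < 1) :
    ((r:ℂ) * Complex.exp ((θ:ℂ) * Complex.I)) ∈ Metric.ball (0:ℂ) 1 := by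
  simp only [Metric.mem_ball, dist_zero_right, norm_mul,
    Complex.norm_exp_ofReal_mul_I, mul_one, Complex.norm_real, Real.norm_eq_abs, _root_.abs_of_nonneg hr]
  exact hr1

lemma cont_coe_mul (θ : ℝ) : Continuous (fun r : ℝ => (r:ℂ) * Complex.exp ((θ:ℂ) * Complex.I)) :=
  (Complex.continuous_ofReal).mul continuous_const

/-- Key real-variable bound. -/
lemma key_bound (ν μ : ℂ → ℝ) (g : ℂ → ℂ) (hν : IsWeight ν) (hμ : IsWeight μ)
    (hgc : ContinuousOn g (Metric.ball (0:ℂ) 1))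
    (θ s : ℝ) (hs0 : 0 ≤ s) (hs1 : s < 1)
    (B N : ℝ) (hB : 0 ≤ B) (hN : 0 ≤ N)
    (hint : ∀ t ∈ Set.Ico (0:ℝ) 1,
      μ ((t:ℝ) : ℂ) * ∫ r in (0:ℝ)..t,
        ‖g ((r:ℂ) * Complex.exp ((θ:ℂ) * Complex.I))‖ / ((1 - r^2) * ν ((r:ℝ) : ℂ)) ≤ N)
    (Φ : ℝ → ℝ) (hΦc : ContinuousOn Φ (Set.Icc 0 s)) (hΦ0 : ∀ r ∈ Set.Icc (0:ℝ) s, 0 ≤ Φ r)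
    (hΦle : ∀ r ∈ Set.Icc (0:ℝ) s, Φ r ≤
      B * (‖g ((r:ℂ) * Complex.exp ((θ:ℂ) * Complex.I))‖ / ((1 - r^2) * ν ((r:ℝ) : ℂ)))) :
    μ ((s:ℝ) : ℂ) * ∫ r in (0:ℝ)..s, Φ r ≤ B * N := by
  set G : ℝ → ℝ := fun r =>
    ‖g ((r:ℂ) * Complex.exp ((θ:ℂ) * Complex.I))‖ / ((1 - r^2) * ν ((r:ℝ) : ℂ)) with hG
  have hμs : (0:ℝ) ≤ μ ((s:ℝ):ℂ) := hμ.2.1 _ (coe_mem_ball s hs0 hs1)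
  have hνnn : ∀ r : ℝ, 0 ≤ r → r < 1 → 0 ≤ ν ((r:ℝ):ℂ) := fun r h0 h1 =>
    hν.2.1 _ (coe_mem_ball r h0 h1)
  -- continuity of G where ν > 0
  have hGcont : ∀ t : ℝ, 0 ≤ t → t ≤ s → (∀ r ∈ Set.Icc (0:ℝ) t, 0 < ν ((r:ℝ):ℂ)) →
      ContinuousOn G (Set.Icc 0 t) := by
    intro t ht0 hts hpos
    have hsub : ∀ r ∈ Set.Icc (0:ℝ) t, (r:ℂ) * Complex.exp ((θ:ℂ) * Complex.I) ∈ Metric.ball (0:ℂ) 1 :=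
      fun r hr => mem_ball_aux r θ hr.1 (lt_of_le_of_lt (hr.2.trans hts) hs1)
    have hsub2 : ∀ r ∈ Set.Icc (0:ℝ) t, ((r:ℝ):ℂ) ∈ Metric.ball (0:ℂ) 1 :=
      fun r hr => coe_mem_ball r hr.1 (lt_of_le_of_lt (hr.2.trans hts) hs1)
    have hnum : ContinuousOn (fun r : ℝ =>
        ‖g ((r:ℂ) * Complex.exp ((θ:ℂ) * Complex.I))‖) (Set.Icc 0 t) :=
      continuous_norm.comp_continuousOn
        (hgc.comp (cont_coe_mul θ).continuousOn hsub)
    have hden : ContinuousOn (fun r : ℝ => (1 - r^2) * ν ((r:ℝ):ℂ)) (Set.Icc 0 t) := by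
      exact (continuous_const.sub (continuous_pow 2)).continuousOn.mul
        (hν.1.comp Complex.continuous_ofReal.continuousOn hsub2)
    refine hnum.div hden ?_
    intro r hr
    have h1 : 0 < 1 - r^2 := by
      have : r^2 < 1 := by
        have hrs : r < 1 := lt_of_le_of_lt (hr.2.trans hts) hs1
        nlinarith [hr.1]
      linarith
    exact ne_of_gt (mul_pos h1 (hpos r hr))
  have hΦint : ∀ a b : ℝ, 0 ≤ a → a ≤ b → b ≤ s → IntervalIntegrable Φ MeasureTheory.volume a b :=
    fun a b ha hab hb => (hΦc.mono (Set.Icc_subset_Icc ha hb)).intervalIntegrable_of_Icc hab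
  -- main step on intervals where ν > 0
  have hstep : ∀ t : ℝ, 0 ≤ t → t ≤ s → (∀ r ∈ Set.Icc (0:ℝ) t, 0 < ν ((r:ℝ):ℂ)) →
      μ ((s:ℝ):ℂ) * ∫ r in (0:ℝ)..t, Φ r ≤ B * N := by
    intro t ht0 hts hpos
    have hGint : IntervalIntegrable G MeasureTheory.volume 0 t :=
      (hGcont t ht0 hts hpos).intervalIntegrable_of_Icc ht0
    have hBGint : IntervalIntegrable (fun r => B * G r) MeasureTheory.volume 0 t :=
      hGint.const_mul B
    have hmono : (∫ r in (0:ℝ)..t, Φ r) ≤ ∫ r in (0:ℝ)..t, B * G r := by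
      apply intervalIntegral.integral_mono_on ht0 (hΦint 0 t le_rfl ht0 hts) hBGint
      intro r hr
      exact hΦle r ⟨hr.1, hr.2.trans hts⟩
    have hGnn : (0:ℝ) ≤ ∫ r in (0:ℝ)..t, G r := by
      apply intervalIntegral.integral_nonneg ht0
      intro r hr
      have := hpos r hr
      have h1 : (0:ℝ) < 1 - r^2 := by
        have hrs : r < 1 := lt_of_le_of_lt (hr.2.trans hts) hs1
        nlinarith [hr.1]
      positivity
    have hμt : μ ((s:ℝ):ℂ) ≤ μ ((t:ℝ):ℂ) := hμ.2.2.2 t s ht0 hts hs1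
    calc μ ((s:ℝ):ℂ) * ∫ r in (0:ℝ)..t, Φ r
        ≤ μ ((s:ℝ):ℂ) * ∫ r in (0:ℝ)..t, B * G r := by
          exact mul_le_mul_of_nonneg_left hmono hμs
      _ = B * (μ ((s:ℝ):ℂ) * ∫ r in (0:ℝ)..t, G r) := by
          rw [intervalIntegral.integral_const_mul]; ring
      _ ≤ B * (μ ((t:ℝ):ℂ) * ∫ r in (0:ℝ)..t, G r) := by
          apply mul_le_mul_of_nonneg_left _ hB
          exact mul_le_mul_of_nonneg_right hμt hGnn
      _ ≤ B * N := mul_le_mul_of_nonneg_left (hint t ⟨ht0, lt_of_le_of_lt hts hs1⟩) hB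
  by_cases hP : ∀ r ∈ Set.Icc (0:ℝ) s, 0 < ν ((r:ℝ):ℂ)
  · exact hstep s hs0 le_rfl hP
  -- ν vanishes somewhere on [0,s]
  push_neg at hP
  obtain ⟨r₁, hr₁, hr₁'⟩ := hP
  set Z : Set ℝ := {r | r ∈ Set.Icc (0:ℝ) s ∧ ν ((r:ℝ):ℂ) = 0} with hZ
  have hZne : Z.Nonempty := ⟨r₁, hr₁, le_antisymm hr₁'
    (hνnn r₁ hr₁.1 (lt_of_le_of_lt hr₁.2 hs1))⟩
  have hZcomp : IsCompact Z := by
    have hcl : IsClosed Z := by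
      have : Z = Set.Icc 0 s ∩ (fun r : ℝ => ν ((r:ℝ):ℂ)) ⁻¹' {0} := by
        ext r; simp [hZ, Set.mem_Icc]
      rw [this]
      apply ContinuousOn.preimage_isClosed_of_isClosed _ isClosed_Icc isClosed_singleton
      apply hν.1.comp Complex.continuous_ofReal.continuousOn
      intro r hr
      simp [Metric.mem_ball, dist_zero_right, Complex.norm_real, Real.norm_eq_abs,
        _root_.abs_of_nonneg hr.1]
      exact lt_of_le_of_lt hr.2 hs1
    exact isCompact_Icc.of_isClosed_subset hcl (fun r hr => hr.1)
  set r₀ : ℝ := sInf Z with hr₀def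
  have hr₀Z : r₀ ∈ Z := hZcomp.sInf_mem hZne
  have hr₀mem : r₀ ∈ Set.Icc (0:ℝ) s := hr₀Z.1
  have hr₀ν : ν ((r₀:ℝ):ℂ) = 0 := hr₀Z.2
  have hposlt : ∀ r : ℝ, 0 ≤ r → r < r₀ → 0 < ν ((r:ℝ):ℂ) := by
    intro r h0 hlt
    have hrmem : r ∈ Set.Icc (0:ℝ) s := ⟨h0, hlt.le.trans hr₀mem.2⟩
    have : r ∉ Z := fun hr => absurd (csInf_le hZcomp.bddBelow hr) (not_le.mpr hlt)
    have hne : ν ((r:ℝ):ℂ) ≠ 0 := fun h => this ⟨hrmem, h⟩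
    exact lt_of_le_of_ne (hνnn r h0 (lt_of_le_of_lt hrmem.2 hs1)) (Ne.symm hne)
  have hΦzero : ∀ r ∈ Set.Icc r₀ s, Φ r = 0 := by
    intro r hr
    have hrmem : r ∈ Set.Icc (0:ℝ) s := ⟨hr₀mem.1.trans hr.1, hr.2⟩
    have hν0 : ν ((r:ℝ):ℂ) = 0 := le_antisymm
      (hr₀ν ▸ hν.2.2.2 r₀ r hr₀mem.1 hr.1 (lt_of_le_of_lt hr.2 hs1))
      (hνnn r hrmem.1 (lt_of_le_of_lt hr.2 hs1))
    have := hΦle r hrmem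
    rw [hν0, mul_zero, div_zero, mul_zero] at this
    exact le_antisymm this (hΦ0 r hrmem)
  have hsplit : (∫ r in (0:ℝ)..s, Φ r) = ∫ r in (0:ℝ)..r₀, Φ r := by
    have h2 : (∫ r in r₀..s, Φ r) = 0 := by
      rw [intervalIntegral.integral_congr (g := fun _ => (0:ℝ))
        (by intro r hr; rw [Set.uIcc_of_le hr₀mem.2] at hr; exact hΦzero r hr)]
      simp
    have := intervalIntegral.integral_add_adjacent_intervals
      (hΦint 0 r₀ le_rfl hr₀mem.1 hr₀mem.2) (hΦint r₀ s hr₀mem.1 hr₀mem.2 le_rfl)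
    rw [h2, add_zero] at this
    exact this.symm
  rw [hsplit]
  -- bound Φ on [0,s]
  obtain ⟨x₀, _, hx₀⟩ := isCompact_Icc.exists_isMaxOn (Set.nonempty_Icc.mpr hs0) hΦc
  set K : ℝ := max (Φ x₀) 0 with hK
  have hKnn : 0 ≤ K := le_max_right _ _
  have hΦK : ∀ r ∈ Set.Icc (0:ℝ) s, Φ r ≤ K := fun r hr => le_trans (hx₀ hr) (le_max_left _ _)
  rcases eq_or_lt_of_le hr₀mem.1 with h0 | h0
  · rw [← h0]
    simp only [intervalIntegral.integral_same, mul_zero]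
    positivity
  -- r₀ > 0 : limit argument
  apply le_of_forall_pos_le_add
  intro ε hε
  set δ : ℝ := min r₀ (ε / (μ ((s:ℝ):ℂ) * K + 1)) with hδdef
  have hden1 : (0:ℝ) < μ ((s:ℝ):ℂ) * K + 1 := by positivity
  have hδpos : 0 < δ := lt_min h0 (by positivity)
  set t : ℝ := r₀ - δ with htdef
  have ht0 : 0 ≤ t := by
    have : δ ≤ r₀ := min_le_left _ _
    simp [htdef]; linarith
  have htlt : t < r₀ := by simp [htdef]; linarith
  have hts : t ≤ s := le_trans (htlt.le) hr₀mem.2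
  have hstept : μ ((s:ℝ):ℂ) * ∫ r in (0:ℝ)..t, Φ r ≤ B * N :=
    hstep t ht0 hts (fun r hr => hposlt r hr.1 (lt_of_le_of_lt hr.2 htlt))
  have htail : (∫ r in t..r₀, Φ r) ≤ (r₀ - t) * K := by
    have : (∫ r in t..r₀, Φ r) ≤ ∫ _ in t..r₀, K := by
      apply intervalIntegral.integral_mono_on htlt.le (hΦint t r₀ ht0 htlt.le hr₀mem.2)
        intervalIntegrable_const
      intro r hr
      exact hΦK r ⟨le_trans ht0 hr.1, hr.2.trans hr₀mem.2⟩
    simpa [smul_eq_mul] using this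
  have hadd : (∫ r in (0:ℝ)..r₀, Φ r) = (∫ r in (0:ℝ)..t, Φ r) + ∫ r in t..r₀, Φ r :=
    (intervalIntegral.integral_add_adjacent_intervals (hΦint 0 t le_rfl ht0 hts)
      (hΦint t r₀ ht0 htlt.le hr₀mem.2)).symm
  have hr₀t : r₀ - t = δ := by simp [htdef]
  have htailbd : μ ((s:ℝ):ℂ) * ∫ r in t..r₀, Φ r ≤ ε := by
    have h1 : μ ((s:ℝ):ℂ) * ∫ r in t..r₀, Φ r ≤ μ ((s:ℝ):ℂ) * ((r₀ - t) * K) :=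
      mul_le_mul_of_nonneg_left htail hμs
    have h2 : μ ((s:ℝ):ℂ) * ((r₀ - t) * K) = δ * (μ ((s:ℝ):ℂ) * K) := by
      rw [hr₀t]; ring
    have h3 : δ * (μ ((s:ℝ):ℂ) * K) ≤ δ * (μ ((s:ℝ):ℂ) * K + 1) := by nlinarith [hδpos.le]
    have h4 : δ * (μ ((s:ℝ):ℂ) * K + 1) ≤ ε := by
      have hδ2 : δ ≤ ε / (μ ((s:ℝ):ℂ) * K + 1) := min_le_right _ _
      calc δ * (μ ((s:ℝ):ℂ) * K + 1) ≤ (ε / (μ ((s:ℝ):ℂ) * K + 1)) * (μ ((s:ℝ):ℂ) * K + 1) :=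
            mul_le_mul_of_nonneg_right hδ2 hden1.le
        _ = ε := by field_simp
    linarith
  rw [hadd, mul_add]
  linarith

theorem stmt3 (ν μ : ℂ → ℝ) (g : ℂ → ℂ)
    (hν : IsWeight ν) (hμ : IsWeight μ)
    (hg : DifferentiableOn ℂ g (Metric.ball (0:ℂ) 1))
    -- property (U): the derivative estimate for functions in `H^∞_ν`
    (hU : ∃ Cν : ℝ, 0 < Cν ∧ ∀ f : ℂ → ℂ, DifferentiableOn ℂ f (Metric.ball (0:ℂ) 1) →
      ∀ C : ℝ, (∀ z ∈ Metric.ball (0:ℂ) 1, ν z * ‖f z‖ ≤ C) →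
      ∀ z ∈ Metric.ball (0:ℂ) 1,
        ‖deriv f z‖ ≤ Cν * C / (ν z * (1 - ‖z‖ ^ 2)))
    (hint : ∃ N : ℝ, ∀ t ∈ Set.Ico (0:ℝ) 1, ∀ θ ∈ Set.Ico (0:ℝ) (2*Real.pi),
      μ ((t:ℝ) : ℂ) * ∫ r in (0:ℝ)..t,
        ‖g ((r:ℂ) * Complex.exp ((θ:ℂ) * Complex.I))‖ / ((1 - r^2) * ν ((r:ℝ) : ℂ)) ≤ N) :
    ∃ M : ℝ, ∀ f : ℂ → ℂ, DifferentiableOn ℂ f (Metric.ball (0:ℂ) 1) →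
      ∀ C : ℝ, (∀ z ∈ Metric.ball (0:ℂ) 1, ν z * ‖f z‖ ≤ C) →
      ∀ z ∈ Metric.ball (0:ℂ) 1, μ z * ‖Sg g f z‖ ≤ M * C := by
  obtain ⟨Cν, hCν, hUd⟩ := hU
  obtain ⟨N, hintN⟩ := hint
  have hπ : (0:ℝ) < 2 * Real.pi := by positivity
  have hN : 0 ≤ N := by
    have := hintN 0 ⟨le_rfl, one_pos⟩ 0 ⟨le_rfl, hπ⟩
    simpa using this
  refine ⟨Cν * N, ?_⟩
  intro f hf C hC z hz
  have h0ball : (0:ℂ) ∈ Metric.ball (0:ℂ) 1 := Metric.mem_ball_self one_pos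
  have hC0 : 0 ≤ C :=
    le_trans (mul_nonneg (hν.2.1 0 h0ball) (norm_nonneg _)) (hC 0 h0ball)
  by_cases hz0 : z = 0
  · subst hz0
    simp only [Sg, zero_mul, norm_zero, mul_zero]
    positivity
  -- z ≠ 0
  set s : ℝ := ‖z‖ with hs
  have hs0 : 0 < s := norm_pos_iff.mpr hz0
  have hs1 : s < 1 := by
    simpa [Metric.mem_ball, dist_zero_right] using hz
  set θ : ℝ := if 0 ≤ z.arg then z.arg else z.arg + 2 * Real.pi with hθdef
  have hargIoc := Complex.arg_mem_Ioc z
  have hθmem : θ ∈ Set.Ico (0:ℝ) (2 * Real.pi) := by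
    rcases le_or_gt 0 z.arg with h | h
    · rw [hθdef, if_pos h]
      exact ⟨h, lt_of_le_of_lt hargIoc.2 (by nlinarith [Real.pi_pos])⟩
    · rw [hθdef, if_neg (not_le.mpr h)]
      constructor
      · nlinarith [hargIoc.1, Real.pi_pos]
      · linarith
  set e : ℂ := Complex.exp ((θ:ℂ) * Complex.I) with he
  have hze : (s:ℂ) * e = z := by
    rcases le_or_gt 0 z.arg with h | h
    · rw [he, hθdef, if_pos h]
      exact Complex.norm_mul_exp_arg_mul_I z
    · rw [he, hθdef, if_neg (not_le.mpr h)]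
      have : ((z.arg + 2 * Real.pi : ℝ):ℂ) * Complex.I
          = (z.arg : ℂ) * Complex.I + 2 * Real.pi * Complex.I := by push_cast; ring
      rw [this, Complex.exp_add, Complex.exp_two_pi_mul_I, mul_one]
      exact Complex.norm_mul_exp_arg_mul_I z
  -- continuity of deriv f and g on the ball
  have hfa : AnalyticOnNhd ℂ f (Metric.ball (0:ℂ) 1) := hf.analyticOnNhd Metric.isOpen_ball
  have hdf : ContinuousOn (deriv f) (Metric.ball (0:ℂ) 1) := hfa.deriv.continuousOn
  have hgc : ContinuousOn g (Metric.ball (0:ℂ) 1) := hg.continuousOn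
  set Φ : ℝ → ℝ := fun r => ‖deriv f ((r:ℂ) * e) * g ((r:ℂ) * e)‖ with hΦdef
  have hsub : ∀ r ∈ Set.Icc (0:ℝ) s, (r:ℂ) * e ∈ Metric.ball (0:ℂ) 1 :=
    fun r hr => mem_ball_aux r θ hr.1 (lt_of_le_of_lt hr.2 hs1)
  have hΦc : ContinuousOn Φ (Set.Icc 0 s) := by
    apply continuous_norm.comp_continuousOn
    exact ((hdf.comp (cont_coe_mul θ).continuousOn hsub).mul
      (hgc.comp (cont_coe_mul θ).continuousOn hsub))
  have hΦ0 : ∀ r ∈ Set.Icc (0:ℝ) s, 0 ≤ Φ r := fun r _ => norm_nonneg _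
  have hΦle : ∀ r ∈ Set.Icc (0:ℝ) s, Φ r ≤
      (Cν * C) * (‖g ((r:ℂ) * e)‖ / ((1 - r^2) * ν ((r:ℝ):ℂ))) := by
    intro r hr
    have hmem := hsub r hr
    have hd := hUd f hf C hC _ hmem
    have habs : ‖(r:ℂ) * e‖ = r := by
      rw [norm_mul, he, Complex.norm_exp_ofReal_mul_I, mul_one, Complex.norm_real, Real.norm_eq_abs,
        _root_.abs_of_nonneg hr.1]
    have hνr : ν ((r:ℂ) * e) = ν ((r:ℝ):ℂ) := by
      rw [hν.2.2.1 ((r:ℂ) * e), habs]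
    rw [hνr, habs] at hd
    have : Φ r = ‖deriv f ((r:ℂ) * e)‖ * ‖g ((r:ℂ) * e)‖ := norm_mul _ _
    rw [this]
    calc ‖deriv f ((r:ℂ) * e)‖ * ‖g ((r:ℂ) * e)‖
        ≤ (Cν * C / (ν ((r:ℝ):ℂ) * (1 - r ^ 2))) * ‖g ((r:ℂ) * e)‖ :=
          mul_le_mul_of_nonneg_right hd (norm_nonneg _)
      _ = (Cν * C) * (‖g ((r:ℂ) * e)‖ / ((1 - r^2) * ν ((r:ℝ):ℂ))) := by
          rw [mul_comm (ν ((r:ℝ):ℂ)) (1 - r^2), div_mul_eq_mul_div, mul_div_assoc]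
  have hkey := key_bound ν μ g hν hμ hgc θ s hs0.le hs1 (Cν * C) N
    (mul_nonneg hCν.le hC0) hN (fun t ht => hintN t ht θ hθmem) Φ hΦc hΦ0 hΦle
  -- now rewrite the goal
  have hμz : μ z = μ ((s:ℝ):ℂ) := hμ.2.2.1 z
  have hFnorm : ∀ t : ℝ, ‖deriv f ((t:ℂ) * z) * g ((t:ℂ) * z)‖ = Φ (t * s) := by
    intro t
    have : ((t * s : ℝ):ℂ) * e = (t:ℂ) * z := by
      rw [← hze]; push_cast; ring
    rw [hΦdef]
    simp only [this]
  have habsSg : ‖Sg g f z‖ ≤ s * ∫ t in (0:ℝ)..1, Φ (t * s) := by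
    rw [Sg, norm_mul, ← hs]
    apply mul_le_mul_of_nonneg_left _ hs0.le
    calc ‖∫ t in (0:ℝ)..1, deriv f ((t:ℂ) * z) * g ((t:ℂ) * z)‖
        ≤ ∫ t in (0:ℝ)..1, ‖deriv f ((t:ℂ) * z) * g ((t:ℂ) * z)‖ := by
                    exact intervalIntegral.norm_integral_le_integral_norm zero_le_one
      _ = ∫ t in (0:ℝ)..1, Φ (t * s) := by
          apply intervalIntegral.integral_congr
          intro t _
          exact hFnorm t
  have hsubst : (s : ℝ) * ∫ t in (0:ℝ)..1, Φ (t * s) = ∫ r in (0:ℝ)..s, Φ r := by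
    rw [intervalIntegral.integral_comp_mul_right Φ hs0.ne']
    simp [smul_eq_mul]
    field_simp
  calc μ z * ‖Sg g f z‖
      ≤ μ ((s:ℝ):ℂ) * (s * ∫ t in (0:ℝ)..1, Φ (t * s)) := by
        rw [hμz]
        exact mul_le_mul_of_nonneg_left habsSg (hμ.2.1 _ (coe_mem_ball s hs0.le hs1))
    _ = μ ((s:ℝ):ℂ) * ∫ r in (0:ℝ)..s, Φ r := by rw [hsubst]
    _ ≤ (Cν * C) * N := hkey
    _ = Cν * N * C := by ring
end
end

section
/- Let ν be an analytic weight, i.e. ν(z) = 1/f_ν(|z|) for some analytic function f_ν on 𝔻 satisfying |f_ν(z)| ≤ f_ν(|z|) for all z ∈ 𝔻. Then ν equals its associated weight: ν̃ = ν, where ν̃(z) = 1 / sup{|f(z)| : f analytic, sup_w ν(w)|f(w)| ≤ 1}. -/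
open Complex Metric Set Filter Real MeasureTheory

noncomputable section

def assocWeight (ν : ℂ → ℝ) (z : ℂ) : ℝ :=
  (sSup {a : ℝ | ∃ f : ℂ → ℂ, DifferentiableOn ℂ f (Metric.ball (0:ℂ) 1) ∧
      (∀ w ∈ Metric.ball (0:ℂ) 1, ν w * ‖f w‖ ≤ 1) ∧ a = ‖f z‖})⁻¹

/-- An analytic weight equals its associated weight: if `ν(z) = 1/f_ν(|z|)` for an analytic
`f_ν` with `|f_ν(z)| ≤ f_ν(|z|)` (the latter real and positive), then `ν̃ = ν` on `𝔻`. -/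
theorem stmt5 (ν : ℂ → ℝ) (fν : ℂ → ℂ)
    (hν : IsWeight ν)
    (hfν : DifferentiableOn ℂ fν (Metric.ball (0:ℂ) 1))
    (hreal : ∀ z ∈ Metric.ball (0:ℂ) 1, (fν ((‖z‖ : ℝ) : ℂ)).im = 0)
    (hpos : ∀ z ∈ Metric.ball (0:ℂ) 1, 0 < (fν ((‖z‖ : ℝ) : ℂ)).re)
    (hbound : ∀ z ∈ Metric.ball (0:ℂ) 1,
      ‖fν z‖ ≤ (fν ((‖z‖ : ℝ) : ℂ)).re)
    (hνdef : ∀ z ∈ Metric.ball (0:ℂ) 1, ν z = ((fν ((‖z‖ : ℝ) : ℂ)).re)⁻¹) :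
    ∀ z ∈ Metric.ball (0:ℂ) 1, assocWeight ν z = ν z := by
  intro z hz
  have hball : ∀ w : ℂ, w ∈ Metric.ball (0:ℂ) 1 ↔ ‖w‖ < 1 := by
    intro w; simp [Metric.mem_ball, Complex.dist_eq]
  -- abs of fν at real radius equals its real part
  have habs : ∀ w ∈ Metric.ball (0:ℂ) 1,
      ‖fν ((‖w‖ : ℝ) : ℂ)‖ = (fν ((‖w‖ : ℝ) : ℂ)).re := by
    intro w hw
    have h1 : fν ((‖w‖ : ℝ) : ℂ) = (((fν ((‖w‖ : ℝ) : ℂ)).re : ℝ) : ℂ) :=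
      Complex.ext rfl (by simp [hreal w hw])
    conv_lhs => rw [h1]
    rw [Complex.norm_real, Real.norm_of_nonneg (hpos w hw).le]
  set x : ℝ := (fν ((‖z‖ : ℝ) : ℂ)).re with hx
  have hxpos : 0 < x := hpos z hz
  have hνz : ν z = x⁻¹ := hνdef z hz
  set S : Set ℝ := {a : ℝ | ∃ f : ℂ → ℂ, DifferentiableOn ℂ f (Metric.ball (0:ℂ) 1) ∧
      (∀ w ∈ Metric.ball (0:ℂ) 1, ν w * ‖f w‖ ≤ 1) ∧ a = ‖f z‖}
      with hS
  -- the rotated fν witnesses x ∈ S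
  set c : ℂ := if z = 0 then 1 else (starRingEnd ℂ) z / ((‖z‖ : ℝ) : ℂ) with hc
  have habsc : ‖c‖ = 1 := by
    rcases eq_or_ne z 0 with h | h
    · simp [hc, h]
    · simp [hc, h, norm_div, Complex.norm_conj, Complex.norm_real,
        _root_.abs_of_nonneg (norm_nonneg z), div_self (norm_ne_zero_iff.mpr h)]
  have hcz : c * z = ((‖z‖ : ℝ) : ℂ) := by
    rcases eq_or_ne z 0 with h | h
    · simp [h]
    · field_simp [hc, h]
      rw [hc, if_neg h, div_mul_eq_mul_div, div_eq_iff (by exact_mod_cast norm_ne_zero_iff.mpr h),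
        mul_comm ((starRingEnd ℂ) z), Complex.mul_conj, Complex.normSq_eq_norm_sq]
      push_cast
      ring
  have hmaps : ∀ w ∈ Metric.ball (0:ℂ) 1, c * w ∈ Metric.ball (0:ℂ) 1 := by
    intro w hw
    rw [hball] at hw ⊢
    simpa [norm_mul, habsc] using hw
  have hmem : x ∈ S := by
    refine ⟨fun w => fν (c * w), ?_, ?_, ?_⟩
    · exact hfν.comp ((differentiable_const c).mul differentiable_id).differentiableOn hmaps
    · intro w hw
      have hbw : ‖fν (c * w)‖ ≤ (fν ((‖w‖ : ℝ) : ℂ)).re := by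
        have := hbound (c * w) (hmaps w hw)
        simpa [norm_mul, habsc] using this
      rw [hνdef w hw]
      have hwpos := hpos w hw
      calc ((fν ((‖w‖ : ℝ) : ℂ)).re)⁻¹ * ‖fν (c * w)‖
          ≤ ((fν ((‖w‖ : ℝ) : ℂ)).re)⁻¹ * (fν ((‖w‖ : ℝ) : ℂ)).re :=
            mul_le_mul_of_nonneg_left hbw (by positivity)
        _ = 1 := inv_mul_cancel₀ hwpos.ne'
    · show x = ‖fν (c * z)‖
      rw [hcz, habs z hz]
  have hub : ∀ a ∈ S, a ≤ x := by
    rintro a ⟨f, hf, hbd, rfl⟩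
    have := hbd z hz
    rw [hνz] at this
    calc ‖f z‖ = x * (x⁻¹ * ‖f z‖) := by
          field_simp
      _ ≤ x * 1 := mul_le_mul_of_nonneg_left this hxpos.le
      _ = x := mul_one x
  have hsup : sSup S = x := le_antisymm (csSup_le ⟨x, hmem⟩ hub) (le_csSup ⟨x, hub⟩ hmem)
  show (sSup S)⁻¹ = ν z
  rw [hsup, hνz]
end
end

section
/- Let ν and μ be weights with ν strictly positive on [0,1). Suppose that for every ε > 0 there exist t₂ < 1 and t₁ ∈ (t₂, 1) such that sup_{0≤θ<2π} μ(t) ∫_{t₂}^{t} |g'(r e^{iθ})|/ν(r) dr < ε whenever t₁ < t < 1, i.e. lim_{t₂→1⁻} limsup_{t₁→1⁻} sup_θ μ(t₁) ∫_{t₂}^{t₁} |g'(re^{iθ})|/ν(r) dr = 0, and suppose additionally μ is bounded. Then T_g : H^∞_ν → H^∞_μ is compact: for every sequence (f_n) bounded in H^∞_ν with f_n → 0 uniformly on compact subsets of 𝔻, one has ‖T_g f_n‖_{H^∞_μ} → 0. -/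
open Complex Metric Set Filter Real MeasureTheory intervalIntegral

noncomputable section

def Tg (g f : ℂ → ℂ) (z : ℂ) : ℂ :=
  z * ∫ t in (0:ℝ)..1, f ((t:ℂ) * z) * deriv g ((t:ℂ) * z)

set_option maxHeartbeats 2000000 in
/-- The vanishing double-limit condition implies compactness of `T_g : H^∞_ν → H^∞_μ`,
expressed via the sequential criterion. -/
theorem stmt7 (ν μ : ℂ → ℝ) (g : ℂ → ℂ)
    (hν : IsWeight ν) (hμ : IsWeight μ)
    (hνpos : ∀ r : ℝ, 0 ≤ r → r < 1 → 0 < ν ((r:ℝ) : ℂ))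
    (hμbdd : ∃ B : ℝ, ∀ z ∈ Metric.ball (0:ℂ) 1, μ z ≤ B)
    (hg : DifferentiableOn ℂ g (Metric.ball (0:ℂ) 1))
    (hvan : ∀ ε > (0:ℝ), ∃ t₂ ∈ Set.Ico (0:ℝ) 1, ∃ t₁ ∈ Set.Ioo t₂ 1,
      ∀ t ∈ Set.Ioo t₁ 1, ∀ θ ∈ Set.Ico (0:ℝ) (2*Real.pi),
        μ ((t:ℝ) : ℂ) * ∫ r in t₂..t,
          ‖deriv g ((r:ℂ) * Complex.exp ((θ:ℂ) * Complex.I))‖ / ν ((r:ℝ) : ℂ) < ε) :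
    ∀ (f : ℕ → ℂ → ℂ) (W : ℝ),
      (∀ n, DifferentiableOn ℂ (f n) (Metric.ball (0:ℂ) 1)) →
      (∀ n, ∀ z ∈ Metric.ball (0:ℂ) 1, ν z * ‖f n z‖ ≤ W) →
      (∀ K : Set ℂ, K ⊆ Metric.ball (0:ℂ) 1 → IsCompact K →
        TendstoUniformlyOn f 0 Filter.atTop K) →
      ∀ ε > (0:ℝ), ∃ N : ℕ, ∀ n ≥ N, ∀ z ∈ Metric.ball (0:ℂ) 1,
        μ z * ‖Tg g (f n) z‖ ≤ ε := by
  intro f W hfdiff hfbound hfconv ε hε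
  obtain ⟨B, hB⟩ := hμbdd
  have h0mem : (0:ℂ) ∈ Metric.ball (0:ℂ) 1 := by simp
  have hW0 : 0 ≤ W :=
    le_trans (mul_nonneg (hν.2.1 0 h0mem) (norm_nonneg _)) (hfbound 0 0 h0mem)
  have hB0 : 0 ≤ B := le_trans (hμ.2.1 0 h0mem) (hB 0 h0mem)
  have hε'pos : (0:ℝ) < ε / (2*(W+1)) := by positivity
  obtain ⟨t₂, ht₂, t₁, ht₁, hmain⟩ := hvan _ hε'pos
  have ht₂0 : 0 ≤ t₂ := ht₂.1
  have ht₁0 : 0 ≤ t₁ := le_trans ht₂0 ht₁.1.le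
  have ht₁1 : t₁ < 1 := ht₁.2
  have hsub : Metric.closedBall (0:ℂ) t₁ ⊆ Metric.ball (0:ℂ) 1 := by
    intro w hw
    simp only [Metric.mem_closedBall, Metric.mem_ball] at hw ⊢
    linarith
  have hg' : ContinuousOn (deriv g) (Metric.ball (0:ℂ) 1) :=
    ((hg.analyticOnNhd Metric.isOpen_ball).deriv).continuousOn
  obtain ⟨M, hM⟩ := (isCompact_closedBall (0:ℂ) t₁).exists_bound_of_continuousOn (hg'.mono hsub)
  have hM0 : 0 ≤ M := le_trans (norm_nonneg _) (hM 0 (by simpa using ht₁0))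
  have hδpos : (0:ℝ) < ε / (2*(B*M+1)) := by positivity
  set δ := ε / (2*(B*M+1)) with hδdef
  have hkey1 : B * (δ * M) ≤ ε / 2 := by
    have h2 : δ * (2*(B*M+1)) = ε := by
      rw [hδdef]; field_simp
    nlinarith [mul_nonneg hB0 hM0, hδpos.le]
  obtain ⟨N, hN⟩ := Filter.eventually_atTop.mp
    ((Metric.tendstoUniformlyOn_iff.mp (hfconv _ hsub (isCompact_closedBall _ _))) δ hδpos)
  refine ⟨N, fun n hn z hz => ?_⟩
  have hfsmall : ∀ w : ℂ, ‖w‖ ≤ t₁ → ‖f n w‖ ≤ δ := by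
    intro w hw
    have h := hN n hn w (by
      simp only [Metric.mem_closedBall, Complex.dist_eq, sub_zero]
      exact hw)
    simp only [Pi.zero_apply, dist_zero_left] at h
    exact h.le
  set s := ‖z‖ with hsdef
  have hs1 : s < 1 := by
    have := hz
    simp only [Metric.mem_ball, Complex.dist_eq, sub_zero] at this
    exact this
  have hs0 : 0 ≤ s := norm_nonneg z
  have hμz : μ z = μ ((s:ℝ):ℂ) := hμ.2.2.1 z
  have hsmem : ((s:ℝ):ℂ) ∈ Metric.ball (0:ℂ) 1 := by
    simp only [Metric.mem_ball, dist_zero_right, Complex.norm_real, Real.norm_eq_abs,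
      _root_.abs_of_nonneg hs0]
    exact hs1
  have hμs0 : 0 ≤ μ ((s:ℝ):ℂ) := hμ.2.1 _ hsmem
  have hμsB : μ ((s:ℝ):ℂ) ≤ B := hB _ hsmem
  have hs1' : ‖z‖ < 1 := hs1
  have hs0' : 0 ≤ ‖z‖ := hs0
  have hmapsto : ∀ t:ℝ, 0 ≤ t → t ≤ 1 → (t:ℂ)*z ∈ Metric.ball (0:ℂ) 1 := by
    intro t h0 h1
    rw [Metric.mem_ball, Complex.dist_eq, sub_zero, norm_mul, Complex.norm_real, Real.norm_eq_abs,
      _root_.abs_of_nonneg h0]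
    nlinarith
  set F : ℝ → ℂ := fun t => f n ((t:ℂ)*z) * deriv g ((t:ℂ)*z) with hFdef
  have hcoe : Continuous (fun t:ℝ => (t:ℂ)*z) := by continuity
  have hFc : ContinuousOn F (Set.Icc (0:ℝ) 1) := by
    have hmt : Set.MapsTo (fun t:ℝ => (t:ℂ)*z) (Set.Icc 0 1) (Metric.ball (0:ℂ) 1) :=
      fun t ht => hmapsto t ht.1 ht.2
    exact ((hfdiff n).continuousOn.comp hcoe.continuousOn hmt).mul
      (hg'.comp hcoe.continuousOn hmt)
  have hTg : ‖Tg g (f n) z‖ = s * ‖∫ t in (0:ℝ)..1, F t‖ := by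
    simp only [Tg, norm_mul, hFdef, hsdef]
  have hFabs : ∀ t:ℝ, ‖F t‖ = ‖f n ((t:ℂ)*z)‖ * ‖deriv g ((t:ℂ)*z)‖ := by
    intro t; simp [hFdef, norm_mul]
  have hFconstb : ∀ t:ℝ, 0 ≤ t → t*s ≤ t₁ → t ≤ 1 → ‖F t‖ ≤ δ * M := by
    intro t h0 hts ht1
    have habs : ‖(t:ℂ)*z‖ ≤ t₁ := by
      rw [norm_mul, Complex.norm_real, Real.norm_eq_abs, _root_.abs_of_nonneg h0, ← hsdef]; exact hts
    have h1 := hfsmall _ habs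
    have h2 : ‖deriv g ((t:ℂ)*z)‖ ≤ M := hM _ (by
      simp only [Metric.mem_closedBall, Complex.dist_eq, sub_zero]; exact habs)
    rw [hFabs]
    exact mul_le_mul h1 (by simpa using h2)
      (norm_nonneg _) hδpos.le
  by_cases hst : s ≤ t₁
  · -- small radius case
    have hb : ∀ t ∈ Set.uIoc (0:ℝ) 1, ‖F t‖ ≤ δ * M := by
      intro t ht
      rw [Set.uIoc_of_le zero_le_one] at ht
      exact hFconstb t ht.1.le (by nlinarith [ht.2]) ht.2
    have hIb : ‖∫ t in (0:ℝ)..1, F t‖ ≤ δ * M := by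
      have := intervalIntegral.norm_integral_le_of_norm_le_const hb
      simpa using this
    rw [hμz, hTg]
    calc μ ((s:ℝ):ℂ) * (s * ‖∫ t in (0:ℝ)..1, F t‖) ≤ B * (1 * (δ*M)) := by
          apply mul_le_mul hμsB (mul_le_mul hs1.le hIb (norm_nonneg _) zero_le_one)
            (mul_nonneg hs0 (norm_nonneg _)) hB0
      _ ≤ ε := by rw [one_mul]; linarith
  · push_neg at hst
    have hspos : 0 < s := lt_of_le_of_lt ht₁0 hst
    obtain ⟨θ, hθ0, hθ2, hzeq⟩ : ∃ θ:ℝ, 0 ≤ θ ∧ θ < 2*Real.pi ∧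
        ((s:ℝ):ℂ) * Complex.exp ((θ:ℂ)*Complex.I) = z := by
      by_cases ha : 0 ≤ Complex.arg z
      · exact ⟨Complex.arg z, ha,
          lt_of_le_of_lt (Complex.arg_le_pi z) (by linarith [Real.pi_pos]),
          Complex.norm_mul_exp_arg_mul_I z⟩
      · push_neg at ha
        refine ⟨Complex.arg z + 2*Real.pi,
          by linarith [Complex.neg_pi_lt_arg z, Real.pi_pos], by linarith, ?_⟩
        have hcast : ((Complex.arg z + 2*Real.pi : ℝ):ℂ) * Complex.I
            = (Complex.arg z : ℂ)*Complex.I + 2*(Real.pi:ℂ)*Complex.I := by push_cast; ring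
        rw [hcast, Complex.exp_add, Complex.exp_two_pi_mul_I, mul_one]
        exact Complex.norm_mul_exp_arg_mul_I z
    set c := t₂ / s with hcdef
    have hc0 : 0 ≤ c := div_nonneg ht₂0 hs0
    have hsc : s * c = t₂ := by rw [hcdef]; field_simp
    have hcs : c * s = t₂ := by rw [mul_comm]; exact hsc
    have hc1 : c ≤ 1 := by
      rw [hcdef, div_le_one hspos]; linarith [ht₁.1]
    have hF1 : IntervalIntegrable F MeasureTheory.volume 0 c := by
      apply ContinuousOn.intervalIntegrable
      apply hFc.mono
      rw [Set.uIcc_of_le hc0]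
      exact Set.Icc_subset_Icc le_rfl hc1
    have hF2 : IntervalIntegrable F MeasureTheory.volume c 1 := by
      apply ContinuousOn.intervalIntegrable
      apply hFc.mono
      rw [Set.uIcc_of_le hc1]
      exact Set.Icc_subset_Icc hc0 le_rfl
    have hsplit : (∫ t in (0:ℝ)..c, F t) + (∫ t in c..(1:ℝ), F t) = ∫ t in (0:ℝ)..1, F t :=
      intervalIntegral.integral_add_adjacent_intervals hF1 hF2
    have hI1 : ‖∫ t in (0:ℝ)..c, F t‖ ≤ δ * M := by
      have hb : ∀ t ∈ Set.uIoc (0:ℝ) c, ‖F t‖ ≤ δ * M := by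
        intro t ht
        rw [Set.uIoc_of_le hc0] at ht
        have htle : t*s ≤ t₁ := by
          have h1 : t*s ≤ c*s := mul_le_mul_of_nonneg_right ht.2 hs0
          linarith [ht₁.1.le]
        exact hFconstb t ht.1.le htle (le_trans ht.2 hc1)
      have h := intervalIntegral.norm_integral_le_of_norm_le_const hb
      have hcabs : |c - 0| ≤ 1 := by rw [sub_zero, _root_.abs_of_nonneg hc0]; exact hc1
      have h2 : δ * M * |c - 0| ≤ δ * M * 1 :=
        mul_le_mul_of_nonneg_left hcabs (mul_nonneg hδpos.le hM0)
      rw [mul_one] at h2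
      linarith
    set H : ℝ → ℝ := fun r =>
      ‖deriv g ((r:ℂ) * Complex.exp ((θ:ℂ)*Complex.I))‖ / ν ((r:ℝ):ℂ) with hHdef
    have htz : ∀ t:ℝ, (t:ℂ)*z = ((s*t:ℝ):ℂ) * Complex.exp ((θ:ℂ)*Complex.I) := by
      intro t; rw [← hzeq]; push_cast; ring
    have hstmem : ∀ t:ℝ, c ≤ t → t ≤ 1 → ((s*t:ℝ):ℂ) ∈ Metric.ball (0:ℂ) 1 := by
      intro t htc ht1
      have ht0 : 0 ≤ t := le_trans hc0 htc
      simp only [Metric.mem_ball, dist_zero_right, Complex.norm_real, Real.norm_eq_abs,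
        _root_.abs_of_nonneg (mul_nonneg hs0 ht0)]
      nlinarith
    have hpt : ∀ t ∈ Set.Icc c 1, ‖F t‖ ≤ W * H (s*t) := by
      intro t ht
      have ht0 : 0 ≤ t := le_trans hc0 ht.1
      have hr0 : 0 ≤ s*t := mul_nonneg hs0 ht0
      have hr1 : s*t < 1 := by nlinarith [ht.2]
      have hν1 : 0 < ν ((s*t:ℝ):ℂ) := hνpos _ hr0 hr1
      have hmem : (t:ℂ)*z ∈ Metric.ball (0:ℂ) 1 := hmapsto t ht0 ht.2
      have hb := hfbound n _ hmem
      have habs : ‖(t:ℂ)*z‖ = s*t := by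
        rw [htz t, norm_mul, Complex.norm_real, Real.norm_eq_abs, _root_.abs_of_nonneg hr0,
          Complex.norm_exp_ofReal_mul_I, mul_one]
      have hνeq : ν ((t:ℂ)*z) = ν ((s*t:ℝ):ℂ) := by
        rw [hν.2.2.1 ((t:ℂ)*z), habs]
      rw [hνeq] at hb
      have hfle : ‖f n ((t:ℂ)*z)‖ ≤ W / ν ((s*t:ℝ):ℂ) := by
        rw [le_div_iff₀ hν1]; linarith [hb, mul_comm (ν (((s*t:ℝ)):ℂ)) (‖f n ((t:ℂ)*z)‖)]
      have hHeq : W * H (s*t) = (W / ν ((s*t:ℝ):ℂ)) * ‖deriv g ((t:ℂ)*z)‖ := by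
        rw [hHdef]
        simp only
        rw [htz t, div_mul_eq_mul_div, mul_div_assoc]
      rw [hFabs t, hHeq]
      exact mul_le_mul_of_nonneg_right hfle (norm_nonneg _)
    have hHct : ContinuousOn (fun t => W * H (s*t)) (Set.Icc c 1) := by
      apply ContinuousOn.mul continuousOn_const
      simp only [hHdef]
      apply ContinuousOn.div
      · apply continuous_norm.comp_continuousOn
        apply hg'.comp
        · exact (Continuous.mul (Complex.continuous_ofReal.comp
            (continuous_const.mul continuous_id)) continuous_const).continuousOn
        · intro t ht
          simp only [Metric.mem_ball, dist_zero_right, norm_mul]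
          have h1 : ‖((s*t:ℝ):ℂ)‖ = s*t := by
            rw [Complex.norm_real, Real.norm_eq_abs,
              _root_.abs_of_nonneg (mul_nonneg hs0 (le_trans hc0 ht.1))]
          have h2 : ‖Complex.exp ((θ:ℂ)*Complex.I)‖ = 1 := by
            rw [Complex.norm_exp_ofReal_mul_I]
          rw [h1, h2, mul_one]
          nlinarith [ht.2]
      · apply hν.1.comp
        · exact (Complex.continuous_ofReal.comp (continuous_const.mul continuous_id)).continuousOn
        · intro t ht
          exact hstmem t ht.1 ht.2
      · intro t ht
        exact (hνpos _ (mul_nonneg hs0 (le_trans hc0 ht.1)) (by nlinarith [ht.2])).ne'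
    have hIntF : IntervalIntegrable (fun t => ‖F t‖) MeasureTheory.volume c 1 := hF2.norm
    have hIntH : IntervalIntegrable (fun t => W * H (s*t)) MeasureTheory.volume c 1 := by
      apply ContinuousOn.intervalIntegrable
      rwa [Set.uIcc_of_le hc1]
    have hmono : (∫ t in c..(1:ℝ), ‖F t‖) ≤ ∫ t in c..(1:ℝ), W * H (s*t) :=
      intervalIntegral.integral_mono_on hc1 hIntF hIntH hpt
    have hI2 : ‖∫ t in c..(1:ℝ), F t‖ ≤ ∫ t in c..(1:ℝ), W * H (s*t) :=
      le_trans (intervalIntegral.norm_integral_le_integral_norm hc1) hmono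
    have hsubst : s * ∫ t in c..(1:ℝ), H (s*t) = ∫ r in t₂..s, H r := by
      have h := intervalIntegral.smul_integral_comp_mul_left (a := c) (b := 1) H s
      rw [smul_eq_mul] at h
      rw [h, hsc, mul_one]
    have hvan' := hmain s ⟨hst, hs1⟩ θ ⟨hθ0, hθ2⟩
    have hWH : μ ((s:ℝ):ℂ) * (s * ∫ t in c..(1:ℝ), W * H (s*t)) ≤ ε/2 := by
      have h1 : (∫ t in c..(1:ℝ), W * H (s*t)) = W * ∫ t in c..(1:ℝ), H (s*t) :=
        intervalIntegral.integral_const_mul _ _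
      rw [h1]
      have h2 : μ ((s:ℝ):ℂ) * (s * (W * ∫ t in c..(1:ℝ), H (s*t)))
          = W * (μ ((s:ℝ):ℂ) * (s * ∫ t in c..(1:ℝ), H (s*t))) := by ring
      rw [h2, hsubst]
      have h3 : μ ((s:ℝ):ℂ) * ∫ r in t₂..s, H r ≤ ε/(2*(W+1)) := hvan'.le
      have h4 : W * (μ ((s:ℝ):ℂ) * ∫ r in t₂..s, H r) ≤ W * (ε/(2*(W+1))) :=
        mul_le_mul_of_nonneg_left h3 hW0
      have h5 : W * (ε/(2*(W+1))) ≤ ε/2 := by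
        rw [← mul_div_assoc, div_le_div_iff₀ (by positivity) (by norm_num)]
        nlinarith
      linarith
    have hIHnn : 0 ≤ ∫ t in c..(1:ℝ), W * H (s*t) := by
      apply intervalIntegral.integral_nonneg hc1
      intro t ht
      apply mul_nonneg hW0
      rw [hHdef]
      apply div_nonneg (norm_nonneg _)
      exact hν.2.1 _ (hstmem t ht.1 ht.2)
    rw [hμz, hTg, ← hsplit]
    have hnorm : ‖(∫ t in (0:ℝ)..c, F t) + ∫ t in c..(1:ℝ), F t‖
        ≤ δ*M + ∫ t in c..(1:ℝ), W * H (s*t) :=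
      le_trans (norm_add_le _ _) (add_le_add hI1 hI2)
    have hterm1 : μ ((s:ℝ):ℂ) * (s * (δ*M)) ≤ ε/2 := by
      nlinarith [mul_nonneg hδpos.le hM0, mul_le_mul hμsB (le_refl s) hs0 hB0,
        mul_nonneg hμs0 hs0, mul_nonneg hB0 (mul_nonneg hδpos.le hM0)]
    have hstep : μ ((s:ℝ):ℂ) * (s * ‖(∫ t in (0:ℝ)..c, F t) + ∫ t in c..(1:ℝ), F t‖)
        ≤ μ ((s:ℝ):ℂ) * (s * (δ*M + ∫ t in c..(1:ℝ), W * H (s*t))) :=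
      mul_le_mul_of_nonneg_left (mul_le_mul_of_nonneg_left hnorm hs0) hμs0
    have hexp : μ ((s:ℝ):ℂ) * (s * (δ*M + ∫ t in c..(1:ℝ), W * H (s*t)))
        = μ ((s:ℝ):ℂ) * (s * (δ*M)) + μ ((s:ℝ):ℂ) * (s * ∫ t in c..(1:ℝ), W * H (s*t)) := by
      ring
    linarith [hstep, hexp ▸ hstep]
end
end

section
/- Let ν and μ be typical weights (weights tending to 0 as |z| → 1⁻) and suppose the operator S_g f(z) = ∫₀ᶻ f'(ω) g(ω) dω maps H^0_ν boundedly into H^0_μ. Then the bidual operator S_g** : H^∞_ν → H^∞_μ (under the identifications (H^0_ν)** = H^∞_ν and (H^0_μ)** = H^∞_μ) acts by the same formula, S_g**(f)(z) = ∫₀ᶻ f'(ω) g(ω) dω; consequently S_g : H^∞_ν → H^∞_μ is bounded with the same norm bound. -/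
open Complex Metric Set Filter Real MeasureTheory intervalIntegral
open scoped Topology

noncomputable section

/-- A typical weight: `ν(z) → 0` as `|z| → 1⁻`. -/
def IsTypical (ν : ℂ → ℝ) : Prop :=
  ∀ ε > (0:ℝ), ∃ r ∈ Set.Ico (0:ℝ) 1, ∀ z ∈ Metric.ball (0:ℂ) 1,
    r < ‖z‖ → ν z < ε

/-- Membership in the little space `H^0_ν`: `ν(z)|f(z)| → 0` as `|z| → 1⁻`. -/
def VanishesAtBoundary (ν : ℂ → ℝ) (f : ℂ → ℂ) : Prop :=
  ∀ ε > (0:ℝ), ∃ r ∈ Set.Ico (0:ℝ) 1, ∀ z ∈ Metric.ball (0:ℂ) 1,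
    r < ‖z‖ → ν z * ‖f z‖ < ε

/-- If `S_g : H^0_ν → H^0_μ` is bounded with bound `M` (for typical weights `ν, μ`), then its
biextension `S_g` acts on all of `H^∞_ν` by the same formula and is bounded
`H^∞_ν → H^∞_μ` with the same norm bound. -/
theorem stmt8 (ν μ : ℂ → ℝ) (g : ℂ → ℂ) (M : ℝ)
    (hν : IsWeight ν) (hμ : IsWeight μ)
    (hνtyp : IsTypical ν) (hμtyp : IsTypical μ)
    (hg : DifferentiableOn ℂ g (Metric.ball (0:ℂ) 1))
    (hbd0 : ∀ f : ℂ → ℂ, DifferentiableOn ℂ f (Metric.ball (0:ℂ) 1) →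
      VanishesAtBoundary ν f →
      (VanishesAtBoundary μ (Sg g f) ∧
        ∀ C : ℝ, (∀ z ∈ Metric.ball (0:ℂ) 1, ν z * ‖f z‖ ≤ C) →
          ∀ z ∈ Metric.ball (0:ℂ) 1, μ z * ‖Sg g f z‖ ≤ M * C)) :
    ∀ f : ℂ → ℂ, DifferentiableOn ℂ f (Metric.ball (0:ℂ) 1) →
      ∀ C : ℝ, (∀ z ∈ Metric.ball (0:ℂ) 1, ν z * ‖f z‖ ≤ C) →
      ∀ z ∈ Metric.ball (0:ℂ) 1, μ z * ‖Sg g f z‖ ≤ M * C := by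
  intro f hf C hC z hzmem
  have hz : ‖z‖ < 1 := by simpa using mem_ball_zero_iff.mp hzmem
  set a : ℝ := ‖z‖ with ha
  have ha0 : 0 ≤ a := norm_nonneg z
  -- continuity of deriv f and g on the ball
  have hDc : ContinuousOn (deriv f) (Metric.ball (0:ℂ) 1) :=
    ((hf.analyticOnNhd isOpen_ball).deriv).continuousOn
  have hgc : ContinuousOn g (Metric.ball (0:ℂ) 1) := hg.continuousOn
  have hsub : Metric.closedBall (0:ℂ) a ⊆ Metric.ball (0:ℂ) 1 := closedBall_subset_ball hz
  -- bounds on the closed ball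
  obtain ⟨K₁, hK₁⟩ := (isCompact_closedBall (0:ℂ) a).exists_bound_of_continuousOn (hDc.mono hsub)
  obtain ⟨K₂, hK₂⟩ := (isCompact_closedBall (0:ℂ) a).exists_bound_of_continuousOn (hgc.mono hsub)
  have hK₁0 : 0 ≤ K₁ := le_trans (norm_nonneg _) (hK₁ 0 (mem_closedBall_self ha0))
  have hK₂0 : 0 ≤ K₂ := le_trans (norm_nonneg _) (hK₂ 0 (mem_closedBall_self ha0))
  -- key membership facts
  have habs : ∀ (r : ℝ) (w : ℂ), 0 ≤ r → ‖(r:ℂ) * w‖ = r * ‖w‖ := by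
    intro r w hr
    rw [norm_mul, Complex.norm_real, Real.norm_eq_abs, _root_.abs_of_nonneg hr]
  have hmemcb : ∀ r t : ℝ, r ∈ Set.Icc (0:ℝ) 1 → t ∈ Set.Icc (0:ℝ) 1 →
      ((r:ℂ) * ((t:ℂ) * z)) ∈ Metric.closedBall (0:ℂ) a := by
    intro r t hr ht
    rw [mem_closedBall_zero_iff, habs r _ hr.1, habs t z ht.1, ← ha]
    have hta : t * a ≤ a := by nlinarith [ht.1, ht.2, ha0]
    have hrta : r * (t * a) ≤ t * a := by nlinarith [hr.1, hr.2, mul_nonneg ht.1 ha0]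
    linarith
  have hmemtz : ∀ t : ℝ, t ∈ Set.Icc (0:ℝ) 1 → ((t:ℂ) * z) ∈ Metric.closedBall (0:ℂ) a := by
    intro t ht
    have := hmemcb 1 t (by norm_num) ht
    simpa using this
  -- the parametric integrand
  set F : ℝ → ℝ → ℂ := fun r t => ((r:ℂ) * deriv f ((r:ℂ) * ((t:ℂ) * z))) * g ((t:ℂ) * z) with hF
  -- Claim 1: for r ∈ [0,1], Sg of the dilation
  have claim1 : ∀ r ∈ Set.Icc (0:ℝ) 1,
      Sg g (fun w => f ((r:ℂ) * w)) z = z * ∫ t in (0:ℝ)..1, F r t := by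
    intro r hr
    unfold Sg
    congr 1
    apply intervalIntegral.integral_congr
    intro t ht
    rw [uIcc_of_le zero_le_one] at ht
    have hfd : DifferentiableAt ℂ f ((r:ℂ) * ((t:ℂ) * z)) :=
      hf.differentiableAt (isOpen_ball.mem_nhds (hsub (hmemcb r t hr ht)))
    have hinner : HasDerivAt (fun w : ℂ => (r:ℂ) * w) (r:ℂ) ((t:ℂ) * z) := by
      simpa using (hasDerivAt_id ((t:ℂ) * z)).const_mul (r:ℂ)
    have hd : deriv (fun w => f ((r:ℂ) * w)) ((t:ℂ) * z)
        = deriv f ((r:ℂ) * ((t:ℂ) * z)) * (r:ℂ) :=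
      (hfd.hasDerivAt.comp _ hinner).deriv
    show deriv (fun w => f ((r:ℂ) * w)) ((t:ℂ) * z) * g ((t:ℂ) * z) = F r t
    rw [hd, hF]
    ring
  -- Claim 2: convergence of the integrals as r → 1⁻
  have h01 : (1:ℝ) ∈ Set.Ioc (0:ℝ) 1 := by constructor <;> norm_num
  have hIoo : Set.Ioo (0:ℝ) 1 ∈ 𝓝[<] (1:ℝ) := Ioo_mem_nhdsLT_of_mem h01
  have hFbound : ∀ r ∈ Set.Icc (0:ℝ) 1, ∀ t ∈ Set.Icc (0:ℝ) 1, ‖F r t‖ ≤ K₁ * K₂ := by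
    intro r hr t ht
    have h1 : ‖deriv f ((r:ℂ) * ((t:ℂ) * z))‖ ≤ K₁ := hK₁ _ (hmemcb r t hr ht)
    have h2 : ‖g ((t:ℂ) * z)‖ ≤ K₂ := hK₂ _ (hmemtz t ht)
    have h3 : ‖((r:ℂ))‖ ≤ 1 := by
      rw [Complex.norm_real, Real.norm_eq_abs, _root_.abs_of_nonneg hr.1]; exact hr.2
    calc ‖F r t‖ = ‖((r:ℂ))‖ * ‖deriv f ((r:ℂ) * ((t:ℂ) * z))‖ * ‖g ((t:ℂ) * z)‖ := by
          simp [hF, norm_mul]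
      _ ≤ 1 * K₁ * K₂ := by
          apply mul_le_mul _ h2 (norm_nonneg _) (by positivity)
          exact mul_le_mul h3 h1 (norm_nonneg _) zero_le_one
      _ = K₁ * K₂ := by ring
  have hFcont : ∀ r ∈ Set.Icc (0:ℝ) 1, ContinuousOn (F r) (Set.Icc (0:ℝ) 1) := by
    intro r hr
    have hc1 : ContinuousOn (fun t : ℝ => (r:ℂ) * ((t:ℂ) * z)) (Set.Icc (0:ℝ) 1) :=
      (continuous_const.mul (Complex.continuous_ofReal.mul continuous_const)).continuousOn
    have hc2 : ContinuousOn (fun t : ℝ => ((t:ℂ) * z)) (Set.Icc (0:ℝ) 1) :=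
      (Complex.continuous_ofReal.mul continuous_const).continuousOn
    apply ContinuousOn.mul
    · exact continuousOn_const.mul
        ((hDc.mono hsub).comp hc1 (fun t ht => hmemcb r t hr ht))
    · exact (hgc.mono hsub).comp hc2 (fun t ht => hmemtz t ht)
  have claim2 : Tendsto (fun r => ∫ t in (0:ℝ)..1, F r t) (𝓝[<] (1:ℝ))
      (𝓝 (∫ t in (0:ℝ)..1, F 1 t)) := by
    apply intervalIntegral.tendsto_integral_filter_of_dominated_convergence
      (fun _ : ℝ => K₁ * K₂)
    · filter_upwards [hIoo] with r hr
      exact ((hFcont r (Set.Ioo_subset_Icc_self hr)).mono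
        (by rw [uIoc_of_le zero_le_one]; exact Set.Ioc_subset_Icc_self)).aestronglyMeasurable
        measurableSet_uIoc
    · filter_upwards [hIoo] with r hr
      filter_upwards with t ht
      rw [uIoc_of_le zero_le_one] at ht
      exact hFbound r (Set.Ioo_subset_Icc_self hr) t (Set.Ioc_subset_Icc_self ht)
    · exact intervalIntegrable_const
    · filter_upwards with t ht
      rw [uIoc_of_le zero_le_one] at ht
      have htIcc : t ∈ Set.Icc (0:ℝ) 1 := Set.Ioc_subset_Icc_self ht
      have hmem1 : ((t:ℂ) * z) ∈ Metric.ball (0:ℂ) 1 := hsub (hmemtz t htIcc)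
      have hDct : ContinuousAt (deriv f) ((t:ℂ) * z) :=
        hDc.continuousAt (isOpen_ball.mem_nhds hmem1)
      have hc1'' : Tendsto (fun r : ℝ => (r:ℂ) * ((t:ℂ) * z)) (𝓝 1) (𝓝 ((t:ℂ) * z)) := by
        have h0 : Continuous (fun r : ℝ => (r:ℂ) * ((t:ℂ) * z)) :=
          Complex.continuous_ofReal.mul continuous_const
        simpa using h0.tendsto (1:ℝ)
      have T1 : Tendsto (fun r : ℝ => ((r:ℂ))) (𝓝 (1:ℝ)) (𝓝 (1:ℂ)) := by
        simpa using Complex.continuous_ofReal.tendsto (1:ℝ)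
      have T2 : Tendsto (fun r : ℝ => deriv f ((r:ℂ) * ((t:ℂ) * z)))
          (𝓝 1) (𝓝 (deriv f ((t:ℂ) * z))) := Filter.Tendsto.comp hDct hc1''
      have T3 : Tendsto (fun r : ℝ => F r t) (𝓝 1)
          (𝓝 ((1 * deriv f ((t:ℂ) * z)) * g ((t:ℂ) * z))) :=
        (T1.mul T2).mul tendsto_const_nhds
      have hF1 : F 1 t = (1 * deriv f ((t:ℂ) * z)) * g ((t:ℂ) * z) := by simp [hF]
      rw [hF1]
      exact T3.mono_left nhdsWithin_le_nhds
  -- Claim 3: the bound for each dilation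
  have claim3 : ∀ r ∈ Set.Ioo (0:ℝ) 1,
      μ z * ‖z * ∫ t in (0:ℝ)..1, F r t‖ ≤ M * C := by
    intro r hr
    have hr0 : (0:ℝ) ≤ r := le_of_lt hr.1
    have hr1 : r < 1 := hr.2
    -- dilation membership
    have hmemr : ∀ w ∈ Metric.ball (0:ℂ) 1, ((r:ℂ) * w) ∈ Metric.ball (0:ℂ) 1 := by
      intro w hw
      rw [mem_ball_zero_iff, habs r w hr0]
      have hw1 : ‖w‖ < 1 := by simpa using mem_ball_zero_iff.mp hw
      nlinarith [norm_nonneg w]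
    -- differentiability of the dilation
    have hfr : DifferentiableOn ℂ (fun w => f ((r:ℂ) * w)) (Metric.ball (0:ℂ) 1) := by
      intro w hw
      exact ((hf.differentiableAt (isOpen_ball.mem_nhds (hmemr w hw))).comp w
        (differentiableAt_id.const_mul _)).differentiableWithinAt
    -- bound for f on closedBall 0 r
    have hsubr : Metric.closedBall (0:ℂ) r ⊆ Metric.ball (0:ℂ) 1 := closedBall_subset_ball hr1
    obtain ⟨B, hB⟩ := (isCompact_closedBall (0:ℂ) r).exists_bound_of_continuousOn
      (hf.continuousOn.mono hsubr)
    have hmemcbr : ∀ w ∈ Metric.ball (0:ℂ) 1, ((r:ℂ) * w) ∈ Metric.closedBall (0:ℂ) r := by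
      intro w hw
      rw [mem_closedBall_zero_iff, habs r w hr0]
      have hw1 : ‖w‖ < 1 := by simpa using mem_ball_zero_iff.mp hw
      nlinarith [norm_nonneg w]
    have hB0 : 0 ≤ B := le_trans (norm_nonneg _) (hB 0 (mem_closedBall_self hr0))
    -- the dilation vanishes at the boundary
    have hvan : VanishesAtBoundary ν (fun w => f ((r:ℂ) * w)) := by
      intro ε hε
      obtain ⟨r', hr', h⟩ := hνtyp (ε / (B + 1)) (by positivity)
      refine ⟨r', hr', fun w hw hw' => ?_⟩
      have h1 : ν w < ε / (B + 1) := h w hw hw'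
      have h2 : ‖f ((r:ℂ) * w)‖ ≤ B + 1 := by
        have := hB _ (hmemcbr w hw)
        linarith
      have hν0 : 0 ≤ ν w := hν.2.1 w hw
      calc ν w * ‖f ((r:ℂ) * w)‖ ≤ ν w * (B + 1) :=
            mul_le_mul_of_nonneg_left h2 hν0
        _ < (ε / (B + 1)) * (B + 1) := by
            apply mul_lt_mul_of_pos_right h1 (by positivity)
        _ = ε := by field_simp
    -- the dilation satisfies the same ν-bound C
    have hCr : ∀ w ∈ Metric.ball (0:ℂ) 1, ν w * ‖f ((r:ℂ) * w)‖ ≤ C := by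
      intro w hw
      have hw1 : ‖w‖ < 1 := by simpa using mem_ball_zero_iff.mp hw
      have h1 : ν w ≤ ν ((r:ℂ) * w) := by
        rw [hν.2.2.1 w, hν.2.2.1 ((r:ℂ) * w), habs r w hr0]
        exact hν.2.2.2 (r * ‖w‖) (‖w‖)
          (by positivity) (by nlinarith [norm_nonneg w]) hw1
      calc ν w * ‖f ((r:ℂ) * w)‖
          ≤ ν ((r:ℂ) * w) * ‖f ((r:ℂ) * w)‖ :=
            mul_le_mul_of_nonneg_right h1 (norm_nonneg _)
        _ ≤ C := hC _ (hmemr w hw)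
    have := (hbd0 _ hfr hvan).2 C hCr z hzmem
    rwa [claim1 r (Set.Ioo_subset_Icc_self hr)] at this
  -- put it all together
  have hSgeq : Sg g f z = z * ∫ t in (0:ℝ)..1, F 1 t := by
    unfold Sg
    congr 1
    apply intervalIntegral.integral_congr
    intro t ht
    simp [hF]
  rw [hSgeq]
  have htend : Tendsto (fun r => μ z * ‖z * ∫ t in (0:ℝ)..1, F r t‖)
      (𝓝[<] (1:ℝ)) (𝓝 (μ z * ‖z * ∫ t in (0:ℝ)..1, F 1 t‖)) := by
    apply Tendsto.const_mul
    exact (continuous_norm.tendsto _).comp (claim2.const_mul z)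
  exact le_of_tendsto htend (Filter.eventually_iff.mpr
    (Filter.mem_of_superset hIoo (fun r hr => claim3 r hr)))
end
end

section
/- Let ν be a weight satisfying property (U) (so there is C_ν with |f'(z)| ≤ C_ν ‖f‖_{H^∞_ν}/(ν(z)(1−|z|²)) for all f ∈ H^∞_ν) and let μ be a quasi-normal weight (meaning H^∞_μ = B^∞_ω with equivalent norms, where ω(z) = (1−|z|²)μ(z)). Then S_g : H^∞_ν → H^∞_μ is bounded if and only if sup_{z∈𝔻} (μ(z)/ν(z)) |g(z)| < ∞. -/
open Complex Metric Set Filter Real MeasureTheory intervalIntegral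

noncomputable section

lemma scale_mem_ball {z : ℂ} (hz : z ∈ Metric.ball (0:ℂ) 1) {t : ℝ} (h0 : 0 ≤ t) (h1 : t ≤ 1) :
    (t:ℂ) * z ∈ Metric.ball (0:ℂ) 1 := by
  rw [mem_ball_zero_iff] at hz ⊢
  rw [norm_mul, Complex.norm_real]
  have ht1 : ‖t‖ ≤ 1 := by rwa [Real.norm_eq_abs, _root_.abs_of_nonneg h0]
  calc ‖t‖ * ‖z‖ ≤ 1 * ‖z‖ := mul_le_mul_of_nonneg_right ht1 (norm_nonneg z)
    _ = ‖z‖ := one_mul _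
    _ < 1 := hz

/-- Key lemma: `Sg g f` has derivative `f' g` on the unit ball. -/
lemma SgHasDerivAt (f g : ℂ → ℂ) (hf : DifferentiableOn ℂ f (Metric.ball (0:ℂ) 1))
    (hg : DifferentiableOn ℂ g (Metric.ball (0:ℂ) 1)) {z : ℂ} (hz : z ∈ Metric.ball (0:ℂ) 1) :
    HasDerivAt (Sg g f) (deriv f z * g z) z := by
  set φ : ℂ → ℂ := fun w => deriv f w * g w with hφdef
  have hopen : IsOpen (Metric.ball (0:ℂ) 1) := isOpen_ball
  have hdf : DifferentiableOn ℂ (deriv f) (Metric.ball (0:ℂ) 1) :=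
    ((hf.analyticOnNhd hopen).deriv).differentiableOn
  have hφ : DifferentiableOn ℂ φ (Metric.ball (0:ℂ) 1) := hdf.mul hg
  have hφc : ContinuousOn φ (Metric.ball (0:ℂ) 1) := hφ.continuousOn
  have hdφc : ContinuousOn (deriv φ) (Metric.ball (0:ℂ) 1) :=
    ((hφ.analyticOnNhd hopen).deriv).continuousOn
  have hznorm : ‖z‖ < 1 := mem_ball_zero_iff.mp hz
  set R : ℝ := (1 + ‖z‖) / 2 with hR
  set ε : ℝ := (1 - ‖z‖) / 2 with hε
  have hεpos : 0 < ε := by rw [hε]; linarith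
  have hR1 : R < 1 := by rw [hR]; linarith
  have hRsub : Metric.closedBall (0:ℂ) R ⊆ Metric.ball (0:ℂ) 1 := closedBall_subset_ball hR1
  obtain ⟨B, hB⟩ := (isCompact_closedBall (0:ℂ) R).exists_bound_of_continuousOn
    (hdφc.mono hRsub)
  -- membership helpers
  have hmemc : ∀ {x : ℂ}, x ∈ Metric.ball z ε → ∀ {t : ℝ}, 0 ≤ t → t ≤ 1 →
      (t:ℂ) * x ∈ Metric.closedBall (0:ℂ) R := by
    intro x hx t h0 h1
    have hxn : ‖x‖ ≤ R := by
      have := mem_ball_iff_norm.mp hx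
      calc ‖x‖ = ‖z + (x - z)‖ := by ring_nf
        _ ≤ ‖z‖ + ‖x - z‖ := norm_add_le _ _
        _ ≤ R := by rw [hR]; linarith
    rw [Metric.mem_closedBall, dist_zero_right, norm_mul, Complex.norm_real,
      Real.norm_eq_abs, _root_.abs_of_nonneg h0]
    calc t * ‖x‖ ≤ 1 * R := by
          apply mul_le_mul h1 hxn (norm_nonneg _) zero_le_one
      _ = R := one_mul R
  have hcball : ∀ {w : ℂ}, w ∈ Metric.closedBall (0:ℂ) R → w ∈ Metric.ball (0:ℂ) 1 :=
    fun h => hRsub h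
  -- continuity of the integrands
  have hcontt : Continuous (fun t : ℝ => (t:ℂ) * z) := Complex.continuous_ofReal.mul continuous_const
  have hmapsIcc : MapsTo (fun t : ℝ => (t:ℂ) * z) (Set.uIcc (0:ℝ) 1) (Metric.ball (0:ℂ) 1) := by
    intro t ht
    rw [Set.uIcc_of_le (zero_le_one' ℝ)] at ht
    exact scale_mem_ball hz ht.1 ht.2
  have hcont1 : ContinuousOn (fun t : ℝ => φ ((t:ℂ) * z)) (Set.uIcc (0:ℝ) 1) :=
    hφc.comp hcontt.continuousOn hmapsIcc
  have hcont2 : ContinuousOn (fun t : ℝ => ((t:ℂ) * z) * deriv φ ((t:ℂ) * z)) (Set.uIcc (0:ℝ) 1) :=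
    (hcontt.continuousOn).mul (hdφc.comp hcontt.continuousOn hmapsIcc)
  have h1int : IntervalIntegrable (fun t : ℝ => φ ((t:ℂ) * z)) MeasureTheory.volume 0 1 :=
    hcont1.intervalIntegrable
  have h2int : IntervalIntegrable (fun t : ℝ => ((t:ℂ) * z) * deriv φ ((t:ℂ) * z))
      MeasureTheory.volume 0 1 := hcont2.intervalIntegrable
  -- differentiate under the integral sign
  have key := intervalIntegral.hasDerivAt_integral_of_dominated_loc_of_deriv_le
    (F := fun (x : ℂ) (t : ℝ) => φ ((t:ℂ) * x))
    (F' := fun (x : ℂ) (t : ℝ) => (t:ℂ) * deriv φ ((t:ℂ) * x)) (x₀ := z)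
    (a := 0) (b := 1) (μ := MeasureTheory.volume) (bound := fun _ => B) (Metric.ball_mem_nhds z hεpos)
    ?hFmeas ?hFint ?hF'meas ?hbound ?hboundint ?hdiff
  case hFmeas =>
    filter_upwards [isOpen_ball.eventually_mem hz] with x hx
    have hcont : ContinuousOn (fun t : ℝ => φ ((t:ℂ) * x)) (Set.uIcc (0:ℝ) 1) := by
      apply hφc.comp (Complex.continuous_ofReal.mul continuous_const).continuousOn
      intro t ht
      rw [Set.uIcc_of_le (zero_le_one' ℝ)] at ht
      exact scale_mem_ball hx ht.1 ht.2
    exact (hcont.mono (Set.uIoc_subset_uIcc)).aestronglyMeasurable measurableSet_uIoc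
  case hFint => exact h1int
  case hF'meas =>
    have hcont : ContinuousOn (fun t : ℝ => (t:ℂ) * deriv φ ((t:ℂ) * z)) (Set.uIcc (0:ℝ) 1) :=
      (Complex.continuous_ofReal.continuousOn).mul (hdφc.comp hcontt.continuousOn hmapsIcc)
    exact (hcont.mono (Set.uIoc_subset_uIcc)).aestronglyMeasurable measurableSet_uIoc
  case hbound =>
    apply MeasureTheory.ae_of_all
    intro t ht x hx
    rw [Set.uIoc_of_le (zero_le_one' ℝ)] at ht
    have hmem := hmemc hx ht.1.le ht.2
    rw [norm_mul, Complex.norm_real, Real.norm_eq_abs, _root_.abs_of_nonneg ht.1.le]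
    calc t * ‖deriv φ ((t:ℂ) * x)‖ ≤ 1 * B := by
          apply mul_le_mul ht.2 (hB _ hmem) (norm_nonneg _)  zero_le_one
      _ = B := one_mul B
  case hboundint => exact intervalIntegrable_const
  case hdiff =>
    apply MeasureTheory.ae_of_all
    intro t ht x hx
    rw [Set.uIoc_of_le (zero_le_one' ℝ)] at ht
    have hmem : (t:ℂ) * x ∈ Metric.ball (0:ℂ) 1 := hcball (hmemc hx ht.1.le ht.2)
    have hφat : HasDerivAt φ (deriv φ ((t:ℂ) * x)) ((t:ℂ) * x) :=
      (hφ.differentiableAt (hopen.mem_nhds hmem)).hasDerivAt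
    have hlin : HasDerivAt (fun y : ℂ => (t:ℂ) * y) ((t:ℂ)) x := by
      simpa using (hasDerivAt_id x).const_mul ((t:ℂ))
    have h2 : HasDerivAt (fun y : ℂ => φ ((t:ℂ) * y)) (deriv φ ((t:ℂ) * x) * (t:ℂ)) x :=
      hφat.comp x hlin
    rw [mul_comm (deriv φ ((t:ℂ) * x))] at h2
    exact h2
  obtain ⟨-, hG⟩ := key
  -- product rule
  have hmul := (hasDerivAt_id z).mul hG
  simp only [id_eq, one_mul] at hmul
  -- compute the derivative value via FTC
  have hFTC : (∫ t in (0:ℝ)..1, (φ ((t:ℂ) * z) + ((t:ℂ) * z) * deriv φ ((t:ℂ) * z)))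
      = φ z := by
    have hkey : ∀ t ∈ Set.uIcc (0:ℝ) 1,
        HasDerivAt (fun u : ℝ => (u:ℂ) * φ ((u:ℂ) * z))
          (φ ((t:ℂ) * z) + ((t:ℂ) * z) * deriv φ ((t:ℂ) * z)) t := by
      intro t ht
      rw [Set.uIcc_of_le (zero_le_one' ℝ)] at ht
      have hmem : (t:ℂ) * z ∈ Metric.ball (0:ℂ) 1 := scale_mem_ball hz ht.1 ht.2
      have hφat : HasDerivAt φ (deriv φ ((t:ℂ) * z)) ((t:ℂ) * z) :=
        (hφ.differentiableAt (hopen.mem_nhds hmem)).hasDerivAt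
      have hlin : HasDerivAt (fun w : ℂ => w * z) z ((t:ℂ)) := by
        simpa using (hasDerivAt_id ((t:ℂ))).mul_const z
      have hinner : HasDerivAt (fun w : ℂ => φ (w * z)) (deriv φ ((t:ℂ) * z) * z) ((t:ℂ)) := by
        exact hφat.comp ((t:ℂ)) hlin
      have hprod := (hasDerivAt_id ((t:ℂ))).mul hinner
      have := hprod.comp_ofReal
      refine this.congr_deriv ?_
      simp only [id_eq]
      ring
    have hint : IntervalIntegrable
        (fun t : ℝ => φ ((t:ℂ) * z) + ((t:ℂ) * z) * deriv φ ((t:ℂ) * z))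
        MeasureTheory.volume 0 1 := h1int.add h2int
    have := intervalIntegral.integral_eq_sub_of_hasDerivAt hkey hint
    rw [this]
    norm_num
  have hsplit : (∫ t in (0:ℝ)..1, (φ ((t:ℂ) * z) + ((t:ℂ) * z) * deriv φ ((t:ℂ) * z)))
      = (∫ t in (0:ℝ)..1, φ ((t:ℂ) * z)) + z * ∫ t in (0:ℝ)..1, (t:ℂ) * deriv φ ((t:ℂ) * z) := by
    rw [intervalIntegral.integral_add h1int h2int]
    congr 1
    have : (fun t : ℝ => ((t:ℂ) * z) * deriv φ ((t:ℂ) * z))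
        = fun t : ℝ => z * ((t:ℂ) * deriv φ ((t:ℂ) * z)) := by funext t; ring
    rw [this, intervalIntegral.integral_const_mul]
  have hval : (∫ t in (0:ℝ)..1, φ ((t:ℂ) * z)) + z * (∫ t in (0:ℝ)..1, (t:ℂ) * deriv φ ((t:ℂ) * z))
      = deriv f z * g z := by
    rw [← hsplit, hFTC]
  have : HasDerivAt (fun x : ℂ => x * ∫ t in (0:ℝ)..1, φ ((t:ℂ) * x)) (deriv f z * g z) z := by
    rw [← hval]; exact hmul
  exact this
lemma nu_le_nu_zero (ν : ℂ → ℝ) (hν : IsWeight ν) {z : ℂ} (hz : z ∈ Metric.ball (0:ℂ) 1) :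
    ν z ≤ ν 0 := by
  have hz1 : ‖z‖ < 1 := by
    exact mem_ball_zero_iff.mp hz
  have h := hν.2.2.2 0 (‖z‖) le_rfl (norm_nonneg z) hz1
  rw [hν.2.2.1 z]
  simpa using h

lemma real_mem_ball {t : ℝ} (h0 : 0 ≤ t) (h1 : t < 1) : ((t:ℝ):ℂ) ∈ Metric.ball (0:ℂ) 1 := by
  rw [mem_ball_zero_iff, Complex.norm_real, Real.norm_eq_abs, _root_.abs_of_nonneg h0]
  exact h1

set_option maxHeartbeats 1000000 in
/-- From the derivative estimate (property (U)), the `ν`-norm of the monomial `z^n` is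
dominated by `2 ν(1 - 2K/n)`. -/
lemma monomial_bound (ν : ℂ → ℝ) (hν : IsWeight ν)
    (hνpos : ∀ z ∈ Metric.ball (0:ℂ) 1, 0 < ν z) (K : ℝ) (hK : 1 ≤ K)
    (hUK : ∀ f : ℂ → ℂ, DifferentiableOn ℂ f (Metric.ball (0:ℂ) 1) →
      ∀ C : ℝ, (∀ z ∈ Metric.ball (0:ℂ) 1, ν z * ‖f z‖ ≤ C) →
      ∀ z ∈ Metric.ball (0:ℂ) 1,
        ‖deriv f z‖ ≤ K * C / (ν z * (1 - ‖z‖ ^ 2)))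
    (n : ℕ) (hn : 0 < n) {t : ℝ} (ht : t = 1 - 2 * K / n) (ht0 : 0 ≤ t) :
    ∀ z ∈ Metric.ball (0:ℂ) 1, ν z * ‖z‖ ^ n ≤ 2 * ν ((t:ℝ):ℂ) := by
  have hnR : (0:ℝ) < n := Nat.cast_pos.mpr hn
  have ht1 : t < 1 := by
    rw [ht]; have : 0 < 2 * K / n := by positivity
    linarith
  have htball := real_mem_ball ht0 ht1
  have hνt : 0 < ν ((t:ℝ):ℂ) := hνpos _ htball
  set S : Set ℝ := (fun z => ν z * ‖z‖ ^ n) '' (Metric.ball (0:ℂ) 1) with hS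
  have hSne : S.Nonempty := ⟨_, Set.mem_image_of_mem _ (mem_ball_self one_pos)⟩
  have hSbdd : BddAbove S := by
    refine ⟨ν 0, ?_⟩
    rintro x ⟨w, hw, rfl⟩
    have h1 : ν w ≤ ν 0 := nu_le_nu_zero ν hν hw
    have h2 : ‖w‖ ^ n ≤ 1 := by
      apply pow_le_one₀ (norm_nonneg w)
      exact (mem_ball_zero_iff.mp hw).le
    calc ν w * ‖w‖ ^ n ≤ ν 0 * 1 :=
          mul_le_mul h1 h2 (by positivity) (le_trans (hν.2.1 w hw) h1)
      _ = ν 0 := mul_one _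
  set A : ℝ := sSup S with hA
  have hub : ∀ z ∈ Metric.ball (0:ℂ) 1, ν z * ‖z‖ ^ n ≤ A :=
    fun z hz => le_csSup hSbdd (Set.mem_image_of_mem _ hz)
  intro z hz
  by_contra hcon
  push_neg at hcon
  have hzA : 2 * ν ((t:ℝ):ℂ) < A := lt_of_lt_of_le hcon (hub z hz)
  have hApos : 0 < A := by linarith
  obtain ⟨x, hxS, hx⟩ := exists_lt_of_lt_csSup hSne (show 3/4 * A < A by linarith)
  obtain ⟨w, hw, rfl⟩ := hxS
  have hx' : 3/4 * A < ν w * ‖w‖ ^ n := hx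
  set a : ℝ := ‖w‖ with ha
  have ha1 : a < 1 := by rw [ha]; exact mem_ball_zero_iff.mp hw
  have ha0 : 0 ≤ a := norm_nonneg w
  have hνw : 0 < ν w := hνpos w hw
  have hapos : 0 < a := by
    rcases lt_or_eq_of_le ha0 with h | h
    · exact h
    · exfalso
      have : a ^ n = 0 := by rw [← h]; exact zero_pow hn.ne'
      nlinarith [hνt]
  -- apply the derivative estimate to z ^ n
  have hder := hUK (fun z => z ^ n) ((differentiable_pow n).differentiableOn) A
    (by
      intro u hu
      have : ‖u ^ n‖ = ‖u‖ ^ n := norm_pow _ _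
      rw [this]; exact hub u hu) w hw
  have hderiv : deriv (fun z : ℂ => z ^ n) w = n * w ^ (n - 1) := by
    simp [deriv_pow]
  rw [hderiv] at hder
  have habs : ‖(n : ℂ) * w ^ (n - 1)‖ = n * a ^ (n - 1) := by
    rw [norm_mul, norm_pow, Complex.norm_natCast, ha]
  rw [habs] at hder
  rw [← ha] at hder
  have hD : 0 < ν w * (1 - a ^ 2) :=
    mul_pos hνw (by nlinarith : (0:ℝ) < 1 - a ^ 2)
  rw [le_div_iff₀ hD] at hder
  -- hder : n * a ^ (n - 1) * (ν w * (1 - a ^ 2)) ≤ K * A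
  have hKA : K * A < K * (4/3 * (ν w * a ^ n)) := by
    apply mul_lt_mul_of_pos_left _ (by linarith : (0:ℝ) < K)
    linarith
  have han : a ^ n = a ^ (n - 1) * a := by
    conv_lhs => rw [← Nat.succ_pred_eq_of_pos hn]
    rw [pow_succ]
    rfl
  have hpos : 0 < ν w * a ^ (n - 1) := by positivity
  have hstep : (n:ℝ) * (1 - a ^ 2) < 4/3 * K * a := by
    have h1 : (n:ℝ) * a ^ (n-1) * (ν w * (1 - a ^ 2)) < K * (4/3 * (ν w * a ^ (n-1) * a)) :=
      calc (n:ℝ) * a ^ (n-1) * (ν w * (1 - a ^ 2)) ≤ K * A := hder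
        _ < K * (4/3 * (ν w * a ^ n)) := hKA
        _ = K * (4/3 * (ν w * a ^ (n-1) * a)) := by rw [han]; ring
    have h1' : ((n:ℝ) * (1 - a ^ 2)) * (ν w * a ^ (n-1)) < (4/3 * K * a) * (ν w * a ^ (n-1)) := by
      calc ((n:ℝ) * (1 - a ^ 2)) * (ν w * a ^ (n-1))
          = (n:ℝ) * a ^ (n-1) * (ν w * (1 - a ^ 2)) := by ring
        _ < K * (4/3 * (ν w * a ^ (n-1) * a)) := h1
        _ = (4/3 * K * a) * (ν w * a ^ (n-1)) := by ring
    exact lt_of_mul_lt_mul_right h1' hpos.le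
  -- hence a > t
  have hat : t < a := by
    have h2K : 2 * K / (n:ℝ) = 1 - t := by rw [ht]; ring
    have hn4 : (1 - a ^ 2) < 4/3 * K * a / n := by
      rw [lt_div_iff₀ hnR]
      calc (1 - a ^ 2) * n = (n:ℝ) * (1 - a ^ 2) := by ring
        _ < 4/3 * K * a := hstep
    have haa : 1 - a ≤ 1 - a ^ 2 := by nlinarith
    have hKa : 4/3 * K * a ≤ 4/3 * K := by nlinarith
    have hdivle : 4/3 * K * a / n ≤ 4/3 * K / n :=
      div_le_div_of_nonneg_right hKa hnR.le
    have h43 : (4:ℝ)/3 * K / n = 2/3 * (2 * K / n) := by ring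
    have hfin : 4/3 * K * a / n ≤ 2/3 * (1 - t) := by
      rw [← h2K, ← h43]; exact hdivle
    linarith
  -- contradiction with near-maximality
  have hνwa : ν w ≤ ν ((t:ℝ):ℂ) := by
    rw [hν.2.2.1 w, ← ha]
    exact hν.2.2.2 t a ht0 hat.le ha1
  have hann : a ^ n ≤ 1 := pow_le_one₀ ha0 ha1.le
  nlinarith [hx', hνwa, hann, hνt, hzA, hνw]
set_option maxHeartbeats 1000000 in
/-- If `ν` satisfies property (U) and `μ` is quasi-normal (`H^∞_μ = B^∞_ω` with equivalent
norms, `ω(z) = (1-|z|²)μ(z)`), then `S_g : H^∞_ν → H^∞_μ` is bounded iff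
`sup_z (μ(z)/ν(z))|g(z)| < ∞`. -/
theorem stmt9 (ν μ : ℂ → ℝ) (g : ℂ → ℂ)
    (hν : IsWeight ν) (hμ : IsWeight μ)
    (hνpos : ∀ z ∈ Metric.ball (0:ℂ) 1, 0 < ν z)
    (hg : DifferentiableOn ℂ g (Metric.ball (0:ℂ) 1))
    -- property (U) for ν, via the derivative estimate:
    (hU : ∃ Cν : ℝ, 0 < Cν ∧ ∀ f : ℂ → ℂ, DifferentiableOn ℂ f (Metric.ball (0:ℂ) 1) →
      ∀ C : ℝ, (∀ z ∈ Metric.ball (0:ℂ) 1, ν z * ‖f z‖ ≤ C) →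
      ∀ z ∈ Metric.ball (0:ℂ) 1,
        ‖deriv f z‖ ≤ Cν * C / (ν z * (1 - ‖z‖ ^ 2)))
    -- μ quasi-normal: the H^∞_μ norm and the B^∞_ω norm are equivalent:
    (hqn : ∃ K : ℝ, 0 < K ∧
      (∀ f : ℂ → ℂ, DifferentiableOn ℂ f (Metric.ball (0:ℂ) 1) → ∀ C : ℝ,
        (∀ z ∈ Metric.ball (0:ℂ) 1, μ z * ‖f z‖ ≤ C) →
        ∀ z ∈ Metric.ball (0:ℂ) 1,
          (1 - ‖z‖ ^ 2) * μ z * ‖deriv f z‖ ≤ K * C) ∧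
      (∀ f : ℂ → ℂ, DifferentiableOn ℂ f (Metric.ball (0:ℂ) 1) → ∀ C : ℝ,
        (‖f 0‖ ≤ C ∧
          ∀ z ∈ Metric.ball (0:ℂ) 1,
            (1 - ‖z‖ ^ 2) * μ z * ‖deriv f z‖ ≤ C) →
        ∀ z ∈ Metric.ball (0:ℂ) 1, μ z * ‖f z‖ ≤ K * C)) :
    (∃ M : ℝ, ∀ f : ℂ → ℂ, DifferentiableOn ℂ f (Metric.ball (0:ℂ) 1) →
      ∀ C : ℝ, (∀ z ∈ Metric.ball (0:ℂ) 1, ν z * ‖f z‖ ≤ C) →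
      ∀ z ∈ Metric.ball (0:ℂ) 1, μ z * ‖Sg g f z‖ ≤ M * C)
    ↔ (∃ M : ℝ, ∀ z ∈ Metric.ball (0:ℂ) 1, μ z / ν z * ‖g z‖ ≤ M) := by
  obtain ⟨Cν, hCν, hUc⟩ := hU
  obtain ⟨K', hK', hqn1, hqn2⟩ := hqn
  have h0mem : (0:ℂ) ∈ Metric.ball (0:ℂ) 1 := mem_ball_self one_pos
  have hν0 : 0 < ν 0 := hνpos 0 h0mem
  constructor
  · rintro ⟨M, hM⟩
    set K : ℝ := max Cν 1 with hKdef
    have hK1 : 1 ≤ K := le_max_right _ _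
    have hKC : Cν ≤ K := le_max_left _ _
    have hKpos : (0:ℝ) < K := lt_of_lt_of_le one_pos hK1
    have hUK : ∀ f : ℂ → ℂ, DifferentiableOn ℂ f (Metric.ball (0:ℂ) 1) →
        ∀ C : ℝ, (∀ z ∈ Metric.ball (0:ℂ) 1, ν z * ‖f z‖ ≤ C) →
        ∀ z ∈ Metric.ball (0:ℂ) 1,
          ‖deriv f z‖ ≤ K * C / (ν z * (1 - ‖z‖ ^ 2)) := by
      intro f hf C hC z hz
      have hC0 : 0 ≤ C :=
        le_trans (mul_nonneg (hν.2.1 0 h0mem) (norm_nonneg _)) (hC 0 h0mem)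
      have hz1 : ‖z‖ < 1 := by
        exact mem_ball_zero_iff.mp hz
      have hD : 0 < ν z * (1 - ‖z‖ ^ 2) :=
        mul_pos (hνpos z hz) (by nlinarith [norm_nonneg z])
      refine le_trans (hUc f hf C hC z hz) ?_
      exact div_le_div_of_nonneg_right (mul_le_mul_of_nonneg_right hKC hC0) hD.le
    have key : ∀ f : ℂ → ℂ, DifferentiableOn ℂ f (Metric.ball (0:ℂ) 1) →
        ∀ C : ℝ, (∀ z ∈ Metric.ball (0:ℂ) 1, ν z * ‖f z‖ ≤ C) →
        ∀ a ∈ Metric.ball (0:ℂ) 1,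
          (1 - ‖a‖ ^ 2) * μ a * ‖deriv f a * g a‖ ≤ K' * (M * C) := by
      intro f hf C hC a ha
      have hdiff : DifferentiableOn ℂ (Sg g f) (Metric.ball (0:ℂ) 1) := fun w hw =>
        (SgHasDerivAt f g hf hg hw).differentiableAt.differentiableWithinAt
      have h1 := hqn1 (Sg g f) hdiff (M * C) (hM f hf C hC) a ha
      rwa [(SgHasDerivAt f g hf hg ha).deriv] at h1
    have hid : DifferentiableOn ℂ (fun z : ℂ => z) (Metric.ball (0:ℂ) 1) :=
      differentiable_id.differentiableOn
    have hidC : ∀ z ∈ Metric.ball (0:ℂ) 1, ν z * ‖(fun z : ℂ => z) z‖ ≤ ν 0 := by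
      intro z hz
      have h1 : ν z ≤ ν 0 := nu_le_nu_zero ν hν hz
      have h2 : ‖z‖ ≤ 1 := by
        exact (mem_ball_zero_iff.mp hz).le
      calc ν z * ‖z‖ ≤ ν 0 * 1 :=
            mul_le_mul h1 h2 (norm_nonneg _) hν0.le
        _ = ν 0 := mul_one _
    have hM0 : 0 ≤ M := by
      have h1 := hM _ hid (ν 0) hidC 0 h0mem
      have hSg0 : Sg g (fun z : ℂ => z) 0 = 0 := by simp [Sg]
      rw [hSg0] at h1
      simp only [norm_zero, mul_zero] at h1
      nlinarith [hν0]
    have hνhpos : 0 < ν (((1:ℝ)/2 : ℝ) : ℂ) :=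
      hνpos _ (real_mem_ball (by norm_num) (by norm_num))
    set νh : ℝ := ν (((1:ℝ)/2 : ℝ) : ℂ) with hνhdef
    set A : ℝ := 4/3 * (K' * (M * ν 0)) / νh with hAdef
    set B : ℝ := K' * M * Real.exp (4 * K) / K with hBdef
    have hA0 : 0 ≤ A := by
      rw [hAdef]; positivity
    refine ⟨max A B, ?_⟩
    intro a ha
    have hga : 0 ≤ ‖g a‖ := norm_nonneg _
    have hμa : 0 ≤ μ a := hμ.2.1 a ha
    have hνa : 0 < ν a := hνpos a ha
    set s : ℝ := ‖a‖ with hs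
    have hs0 : 0 ≤ s := norm_nonneg a
    have hs1 : s < 1 := by
      rw [hs]; exact mem_ball_zero_iff.mp ha
    rcases le_or_gt s (1/2) with hsmall | hbig
    · -- |a| ≤ 1/2 : use the identity as test function
      have h1 := key _ hid (ν 0) hidC a ha
      have hda : deriv (fun z : ℂ => z) a = 1 := by simp
      rw [hda, one_mul] at h1
      have h34 : (3:ℝ)/4 ≤ 1 - s ^ 2 := by nlinarith
      have hx : μ a * ‖g a‖ * (3/4) ≤ K' * (M * ν 0) := by
        nlinarith [mul_nonneg hμa hga]
      have hνah : νh ≤ ν a := by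
        rw [hνhdef, hν.2.2.1 a, ← hs]
        exact hν.2.2.2 s (1/2) hs0 hsmall (by norm_num)
      have hgoal : μ a / ν a * ‖g a‖ ≤ A := by
        rw [div_mul_eq_mul_div, div_le_iff₀ hνa]
        calc μ a * ‖g a‖ ≤ 4/3 * (K' * (M * ν 0)) := by linarith
          _ = A * νh := by rw [hAdef]; field_simp
          _ ≤ A * ν a := mul_le_mul_of_nonneg_left hνah hA0
      exact le_trans hgoal (le_max_left A B)
    · -- 1/2 < |a| : monomial test functions
      have h1s : 0 < 1 - s := by linarith
      have harg : 0 < 2 * K / (1 - s) := by positivity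
      set n : ℕ := ⌈2 * K / (1 - s)⌉₊ with hn
      have hnpos : 0 < n := Nat.ceil_pos.mpr harg
      have hnR : (0:ℝ) < n := Nat.cast_pos.mpr hnpos
      have hnge : 2 * K / (1 - s) ≤ n := Nat.le_ceil _
      have hnlt : (n:ℝ) < 2 * K / (1 - s) + 1 := Nat.ceil_lt_add_one harg.le
      set t : ℝ := 1 - 2 * K / (n:ℝ) with htdef
      have hts : s ≤ t := by
        have h2 : 2 * K / (n:ℝ) ≤ 1 - s := by
          rw [div_le_iff₀ hnR]
          calc 2 * K = 2 * K / (1 - s) * (1 - s) := by field_simp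
            _ ≤ (n:ℝ) * (1 - s) := mul_le_mul_of_nonneg_right hnge h1s.le
            _ = (1 - s) * n := mul_comm _ _
        rw [htdef]; linarith
      have ht0 : 0 ≤ t := le_trans hs0 hts
      have ht1 : t < 1 := by
        rw [htdef]
        have : 0 < 2 * K / (n:ℝ) := by positivity
        linarith
      have hmono := monomial_bound ν hν hνpos K hK1 hUK n hnpos htdef ht0
      have hpow : DifferentiableOn ℂ (fun z : ℂ => z ^ n) (Metric.ball (0:ℂ) 1) :=
        (differentiable_pow n).differentiableOn
      have hpowC : ∀ z ∈ Metric.ball (0:ℂ) 1,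
          ν z * ‖(fun z : ℂ => z ^ n) z‖ ≤ 2 * ν ((t:ℝ):ℂ) := by
        intro z hz
        have : ‖z ^ n‖ = ‖z‖ ^ n := norm_pow _ _
        simpa [this] using hmono z hz
      have h1 := key _ hpow (2 * ν ((t:ℝ):ℂ)) hpowC a ha
      have hda : deriv (fun z : ℂ => z ^ n) a = (n:ℂ) * a ^ (n - 1) := by
        simp [deriv_pow]
      rw [hda] at h1
      have habs : ‖(n:ℂ) * a ^ (n - 1) * g a‖
          = (n:ℝ) * s ^ (n - 1) * ‖g a‖ := by
        rw [norm_mul, norm_mul, norm_pow, Complex.norm_natCast, hs]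
      rw [habs] at h1
      have hspos : 0 < s := lt_trans (by norm_num) hbig
      have hlog : -2 * (1 - s) ≤ Real.log s := by
        have ha1 : Real.log s⁻¹ ≤ s⁻¹ - 1 := Real.log_le_sub_one_of_pos (by positivity)
        rw [Real.log_inv] at ha1
        have ha2 : s⁻¹ - 1 = (1 - s) / s := by field_simp
        have ha3 : (1 - s) / s ≤ 2 * (1 - s) := by
          rw [div_le_iff₀ hspos]; nlinarith
        linarith [ha1, ha2 ▸ ha1]
      have hm1 : ((n:ℝ) - 1) ≤ 2 * K / (1 - s) := by linarith
      have hsn : Real.exp (-(4 * K)) ≤ s ^ (n - 1) := by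
        have e1 : s ^ (n - 1) = Real.exp (((n:ℝ) - 1) * Real.log s) := by
          rw [← Real.exp_log (pow_pos hspos (n - 1)), Real.log_pow]
          congr 1
          have : ((n - 1 : ℕ) : ℝ) = (n:ℝ) - 1 := by
            rw [Nat.cast_sub hnpos]; norm_num
          rw [this]
        rw [e1]
        apply Real.exp_le_exp.mpr
        have hlogs0 : Real.log s ≤ 0 := Real.log_nonpos hs0 hs1.le
        calc -(4 * K) = 2 * K / (1 - s) * (-2 * (1 - s)) := by field_simp; ring
          _ ≤ 2 * K / (1 - s) * Real.log s := mul_le_mul_of_nonneg_left hlog harg.le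
          _ ≤ ((n:ℝ) - 1) * Real.log s := mul_le_mul_of_nonpos_right hm1 hlogs0
      have hνts : ν ((t:ℝ):ℂ) ≤ ν a := by
        rw [hν.2.2.1 a, ← hs]
        exact hν.2.2.2 s t hs0 hts ht1
      have hx0 : 0 ≤ μ a * ‖g a‖ := mul_nonneg hμa hga
      have h1s2 : 0 ≤ 1 - s ^ 2 := by nlinarith
      have hprod : 2 * K / (1 - s) * Real.exp (-(4 * K)) ≤ (n:ℝ) * s ^ (n - 1) :=
        mul_le_mul hnge hsn (Real.exp_nonneg _) hnR.le
      have hgrow : 2 * K ≤ (1 - s ^ 2) * (2 * K / (1 - s)) := by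
        have e2 : (1 - s ^ 2) * (2 * K / (1 - s)) = 2 * K * (1 + s) := by
          field_simp; ring
        rw [e2]; nlinarith [hKpos]
      have hL : 2 * K * Real.exp (-(4 * K)) * (μ a * ‖g a‖)
          ≤ K' * (M * (2 * ν a)) := by
        calc 2 * K * Real.exp (-(4 * K)) * (μ a * ‖g a‖)
            ≤ (1 - s ^ 2) * (2 * K / (1 - s)) * Real.exp (-(4 * K))
                * (μ a * ‖g a‖) := by
              apply mul_le_mul_of_nonneg_right _ hx0
              exact mul_le_mul_of_nonneg_right hgrow (Real.exp_nonneg _)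
          _ = (1 - s ^ 2) * (2 * K / (1 - s) * Real.exp (-(4 * K)))
                * (μ a * ‖g a‖) := by ring
          _ ≤ (1 - s ^ 2) * ((n:ℝ) * s ^ (n - 1)) * (μ a * ‖g a‖) := by
              apply mul_le_mul_of_nonneg_right _ hx0
              exact mul_le_mul_of_nonneg_left hprod h1s2
          _ = (1 - s ^ 2) * μ a * ((n:ℝ) * s ^ (n - 1) * ‖g a‖) := by ring
          _ ≤ K' * (M * (2 * ν ((t:ℝ):ℂ))) := h1
          _ ≤ K' * (M * (2 * ν a)) := by
              apply mul_le_mul_of_nonneg_left _ hK'.le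
              apply mul_le_mul_of_nonneg_left _ hM0
              linarith
      have hexpne : Real.exp (4 * K) ≠ 0 := (Real.exp_pos _).ne'
      have hgoal : μ a / ν a * ‖g a‖ ≤ B := by
        rw [div_mul_eq_mul_div, div_le_iff₀ hνa]
        have hpos2 : 0 < 2 * K * Real.exp (-(4 * K)) := by positivity
        rw [← mul_le_mul_iff_right₀ hpos2]
        calc 2 * K * Real.exp (-(4 * K)) * (μ a * ‖g a‖)
            ≤ K' * (M * (2 * ν a)) := hL
          _ = 2 * K * Real.exp (-(4 * K)) * (B * ν a) := by
              rw [hBdef, Real.exp_neg]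
              field_simp
      exact le_trans hgoal (le_max_right A B)
  · rintro ⟨M', hM'⟩
    have hM'0 : 0 ≤ M' := by
      have h1 := hM' 0 h0mem
      have h2 : 0 ≤ μ 0 / ν 0 * ‖g 0‖ :=
        mul_nonneg (div_nonneg (hμ.2.1 0 h0mem) hν0.le) (norm_nonneg _)
      linarith
    refine ⟨K' * (Cν * M'), ?_⟩
    intro f hf C hC z hz
    have hC0 : 0 ≤ C :=
      le_trans (mul_nonneg (hν.2.1 0 h0mem) (norm_nonneg _)) (hC 0 h0mem)
    have hdiff : DifferentiableOn ℂ (Sg g f) (Metric.ball (0:ℂ) 1) := fun w hw =>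
      (SgHasDerivAt f g hf hg hw).differentiableAt.differentiableWithinAt
    have hderivb : ∀ w ∈ Metric.ball (0:ℂ) 1,
        (1 - ‖w‖ ^ 2) * μ w * ‖deriv (Sg g f) w‖ ≤ Cν * M' * C := by
      intro w hw
      rw [(SgHasDerivAt f g hf hg hw).deriv]
      have hνw := hνpos w hw
      have hw1 : ‖w‖ < 1 := by
        exact mem_ball_zero_iff.mp hw
      have hw2 : (0:ℝ) < 1 - ‖w‖ ^ 2 := by nlinarith [norm_nonneg w]
      have hU1 := hUc f hf C hC w hw
      have hg1 := hM' w hw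
      have hμw : 0 ≤ μ w := hμ.2.1 w hw
      calc (1 - ‖w‖ ^ 2) * μ w * ‖deriv f w * g w‖
          = (1 - ‖w‖ ^ 2) * μ w * (‖deriv f w‖ * ‖g w‖) := by
            rw [norm_mul]
        _ ≤ (1 - ‖w‖ ^ 2) * μ w
              * (Cν * C / (ν w * (1 - ‖w‖ ^ 2)) * ‖g w‖) := by
            apply mul_le_mul_of_nonneg_left _ (mul_nonneg hw2.le hμw)
            exact mul_le_mul_of_nonneg_right hU1 (norm_nonneg _)
        _ = Cν * C * (μ w / ν w * ‖g w‖) := by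
            field_simp
        _ ≤ Cν * C * M' := mul_le_mul_of_nonneg_left hg1 (by positivity)
        _ = Cν * M' * C := by ring
    have hSg0 : ‖Sg g f 0‖ ≤ Cν * M' * C := by
      have : Sg g f 0 = 0 := by simp [Sg]
      rw [this, norm_zero]
      positivity
    have h2 := hqn2 (Sg g f) hdiff (Cν * M' * C) ⟨hSg0, hderivb⟩ z hz
    calc μ z * ‖Sg g f z‖ ≤ K' * (Cν * M' * C) := h2
      _ = K' * (Cν * M') * C := by ring
end
end

section
/- Let ν and μ be positive weights on the unit disk and g analytic on 𝔻. Then S_g maps the Bloch type space B^∞_ν boundedly into B^∞_μ if and only if sup_{z∈𝔻} |g(z)| μ(z)/ν̃(z) < ∞, where ν̃ is the associated weight of ν. Equivalently, since (S_g f)' = f' g, this is the statement that the multiplication operator M_g : H^∞_ν → H^∞_μ is bounded iff sup_z |g(z)| μ(z)/ν̃(z) < ∞. -/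
open Complex Metric Set Filter Real MeasureTheory

noncomputable section

/-- Every holomorphic function on the unit disc has a primitive vanishing at `0`. -/
lemma exists_primitive {h : ℂ → ℂ} (hh : DifferentiableOn ℂ h (Metric.ball (0:ℂ) 1)) :
    ∃ F : ℂ → ℂ, F 0 = 0 ∧ ∀ z ∈ Metric.ball (0:ℂ) 1, HasDerivAt F (h z) z := by
  set a : ℕ → ℂ := fun n => (n.factorial : ℂ)⁻¹ * iteratedDeriv n h 0 with ha
  refine ⟨fun z => ∑' n, a n / (n + 1) * z ^ (n + 1), by simp, ?_⟩
  intro z hz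
  rw [mem_ball_zero_iff] at hz
  obtain ⟨r, hr1, hr2⟩ := exists_between hz
  obtain ⟨r', hrr', hr'1⟩ := exists_between hr2
  have hr0 : 0 < r := lt_of_le_of_lt (norm_nonneg z) hr1
  have hr'0 : 0 < r' := hr0.trans hrr'
  have hr'ball : ((r' : ℝ) : ℂ) ∈ Metric.ball (0:ℂ) 1 := by
    rw [mem_ball_zero_iff, Complex.norm_real, Real.norm_eq_abs, abs_of_pos hr'0]
    exact hr'1
  have hS : Summable (fun n => a n * ((r' : ℝ) : ℂ) ^ n) := by
    refine ((Complex.hasSum_taylorSeries_on_ball hh hr'ball).summable).congr fun n => ?_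
    simp only [smul_eq_mul, sub_zero, ha]
    ring
  have htend : Filter.Tendsto (fun n => ‖a n‖ * r' ^ n) atTop (nhds 0) := by
    have := hS.tendsto_atTop_zero.norm
    simp only [norm_zero] at this
    refine this.congr fun n => ?_
    rw [norm_mul, norm_pow, Complex.norm_real, Real.norm_eq_abs, abs_of_pos hr'0]
  obtain ⟨C, hC⟩ := htend.bddAbove_range
  have hCmem : ∀ n, ‖a n‖ * r' ^ n ≤ C := fun n => hC ⟨n, rfl⟩
  have hu : Summable (fun n : ℕ => C * (r / r') ^ n) :=
    (summable_geometric_of_lt_one (by positivity) (by rw [div_lt_one hr'0]; exact hrr')).mul_left C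
  have hg : ∀ (n : ℕ), ∀ y ∈ Metric.ball (0:ℂ) r,
      HasDerivAt (fun w => a n / (n + 1) * w ^ (n + 1)) (a n * y ^ n) y := by
    intro n y _
    have h1 := (hasDerivAt_pow (n + 1) y).const_mul (a n / (n + 1))
    have hne : ((n : ℂ) + 1) ≠ 0 := by
      have : ((n + 1 : ℕ) : ℂ) ≠ 0 := Nat.cast_ne_zero.2 n.succ_ne_zero
      push_cast at this
      exact this
    convert h1 using 1
    · rfl
    · rfl
    rw [Nat.add_sub_cancel]
    push_cast
    field_simp
  have hg' : ∀ (n : ℕ), ∀ y ∈ Metric.ball (0:ℂ) r, ‖a n * y ^ n‖ ≤ C * (r / r') ^ n := by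
    intro n y hy
    rw [mem_ball_zero_iff] at hy
    rw [norm_mul, norm_pow]
    calc ‖a n‖ * ‖y‖ ^ n ≤ ‖a n‖ * r ^ n := by
          gcongr
      _ = (‖a n‖ * r' ^ n) * (r / r') ^ n := by
          rw [mul_assoc, ← mul_pow, mul_comm r' (r / r'),
            div_mul_cancel₀ _ hr'0.ne']
      _ ≤ C * (r / r') ^ n :=
          mul_le_mul_of_nonneg_right (hCmem n) (by positivity)
  have hg0 : Summable (fun n => a n / (n + 1) * (0:ℂ) ^ (n + 1)) := by
    refine summable_zero.congr fun n => ?_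
    simp
  have hzr : z ∈ Metric.ball (0:ℂ) r := mem_ball_zero_iff.2 hr1
  have h0r : (0:ℂ) ∈ Metric.ball (0:ℂ) r := Metric.mem_ball_self hr0
  have H := hasDerivAt_tsum_of_isPreconnected hu isOpen_ball
    (convex_ball (0:ℂ) r).isPreconnected hg hg' h0r hg0 hzr
  have hsum : (∑' n, a n * z ^ n) = h z := by
    rw [← Complex.taylorSeries_eq_on_ball' (mem_ball_zero_iff.2 hz) hh]
    exact tsum_congr fun n => by rw [sub_zero, ha]
  rwa [hsum] at H

/-- `S_g : B^∞_ν → B^∞_μ` is bounded iff `sup_z |g(z)| μ(z)/ν̃(z) < ∞`.  Since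
`(S_g f)' = f'·g` and `S_g f(0) = 0`, boundedness is expressed through the Bloch norms. -/
theorem stmt10 (ν μ : ℂ → ℝ) (g : ℂ → ℂ)
    (hν : IsWeight ν) (hμ : IsWeight μ)
    (hνpos : ∀ z ∈ Metric.ball (0:ℂ) 1, 0 < ν z)
    (hμpos : ∀ z ∈ Metric.ball (0:ℂ) 1, 0 < μ z)
    (hg : DifferentiableOn ℂ g (Metric.ball (0:ℂ) 1)) :
    (∃ M : ℝ, ∀ f : ℂ → ℂ, DifferentiableOn ℂ f (Metric.ball (0:ℂ) 1) →
      ∀ C : ℝ, (‖f 0‖ ≤ C ∧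
          ∀ z ∈ Metric.ball (0:ℂ) 1, ν z * ‖deriv f z‖ ≤ C) →
      ∀ z ∈ Metric.ball (0:ℂ) 1,
        μ z * (‖deriv f z‖ * ‖g z‖) ≤ M * C)
    ↔ (∃ M : ℝ, ∀ z ∈ Metric.ball (0:ℂ) 1,
        ‖g z‖ * μ z / assocWeight ν z ≤ M) := by
  set S : ℂ → Set ℝ := fun z => {a : ℝ | ∃ f : ℂ → ℂ,
      DifferentiableOn ℂ f (Metric.ball (0:ℂ) 1) ∧
      (∀ w ∈ Metric.ball (0:ℂ) 1, ν w * ‖f w‖ ≤ 1) ∧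
      a = ‖f z‖} with hSdef
  have hS0 : ∀ z : ℂ, (0:ℝ) ∈ S z := by
    intro z
    exact ⟨fun _ => 0, differentiableOn_const 0, fun w _ => by simp, by simp⟩
  have hSbdd : ∀ z ∈ Metric.ball (0:ℂ) 1, BddAbove (S z) := by
    intro z hz
    refine ⟨(ν z)⁻¹, fun a ha => ?_⟩
    obtain ⟨f, _, hf1, rfl⟩ := ha
    have h1 := hf1 z hz
    have h2 := hνpos z hz
    have h3 : ν z * ‖f z‖ ≤ ν z * (ν z)⁻¹ := by
      rw [mul_inv_cancel₀ h2.ne']; exact h1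
    exact le_of_mul_le_mul_left h3 h2
  have hdiv : ∀ z : ℂ, ‖g z‖ * μ z / assocWeight ν z
      = ‖g z‖ * μ z * sSup (S z) := by
    intro z
    rw [assocWeight, div_eq_mul_inv, inv_inv]
  constructor
  · rintro ⟨M, hM⟩
    refine ⟨max M 0, fun z hz => ?_⟩
    rw [hdiv]
    set c : ℝ := ‖g z‖ * μ z with hc
    have hc0 : 0 ≤ c := mul_nonneg (norm_nonneg _) (hμpos z hz).le
    rcases eq_or_lt_of_le hc0 with hc' | hc'
    · rw [← hc']
      simp [le_max_iff]
    · have key : ∀ a ∈ S z, c * a ≤ M := by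
        rintro a ⟨f, hf, hf1, rfl⟩
        obtain ⟨F, hF0, hFd⟩ := exists_primitive hf
        have hFdiff : DifferentiableOn ℂ F (Metric.ball (0:ℂ) 1) :=
          fun w hw => ((hFd w hw).differentiableAt).differentiableWithinAt
        have hFderiv : ∀ w ∈ Metric.ball (0:ℂ) 1, deriv F w = f w :=
          fun w hw => (hFd w hw).deriv
        have hb := hM F hFdiff 1 ⟨by simp [hF0], fun w hw => by
          rw [hFderiv w hw]; exact hf1 w hw⟩ z hz
        rw [hFderiv z hz, mul_one] at hb
        calc c * ‖f z‖ = μ z * (‖f z‖ * ‖g z‖) := by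
              rw [hc]; ring
          _ ≤ M := hb
      have hsup : sSup (S z) ≤ M / c :=
        csSup_le ⟨0, hS0 z⟩ fun a ha => (le_div_iff₀' hc').2 (key a ha)
      calc c * sSup (S z) ≤ c * (M / c) := mul_le_mul_of_nonneg_left hsup hc0
        _ = M := by field_simp
        _ ≤ max M 0 := le_max_left _ _
  · rintro ⟨M, hM⟩
    refine ⟨max M 0, fun f hf C hC z hz => ?_⟩
    obtain ⟨hC0, hC1⟩ := hC
    have hCnn : 0 ≤ C := le_trans (norm_nonneg _) hC0
    rcases eq_or_lt_of_le hCnn with hC' | hC'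
    · have h1 : ν z * ‖deriv f z‖ ≤ 0 := by rw [hC']; exact hC1 z hz
      have hd0 : ‖deriv f z‖ = 0 := by
        nlinarith [hνpos z hz, norm_nonneg (deriv f z)]
      rw [hd0, ← hC']
      simp
    · set h : ℂ → ℂ := fun w => deriv f w / (C : ℂ) with hh
      have hderivdiff : DifferentiableOn ℂ (deriv f) (Metric.ball (0:ℂ) 1) :=
        ((hf.analyticOnNhd isOpen_ball).deriv).differentiableOn
      have hhd : DifferentiableOn ℂ h (Metric.ball (0:ℂ) 1) :=
        hderivdiff.div_const _
      have habs : ∀ w : ℂ, ‖h w‖ = ‖deriv f w‖ / C := by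
        intro w
        rw [hh]
        simp only [norm_div, Complex.norm_real, Real.norm_eq_abs, abs_of_pos hC']
      have hmem : ‖h z‖ ∈ S z := by
        refine ⟨h, hhd, fun w hw => ?_, rfl⟩
        rw [habs w]
        rw [← mul_div_assoc, div_le_one hC']
        exact hC1 w hw
      have hle : ‖h z‖ ≤ sSup (S z) := le_csSup (hSbdd z hz) hmem
      have hkey := hM z hz
      rw [hdiv] at hkey
      have hgz : 0 ≤ ‖g z‖ * μ z := mul_nonneg (norm_nonneg _) (hμpos z hz).le
      calc μ z * (‖deriv f z‖ * ‖g z‖)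
          = (‖g z‖ * μ z * ‖h z‖) * C := by
            rw [habs]; field_simp
        _ ≤ (‖g z‖ * μ z * sSup (S z)) * C := by gcongr
        _ ≤ M * C := by gcongr
        _ ≤ max M 0 * C := by gcongr; exact le_max_left _ _
end
end

section
/- Let ν and μ be positive weights and g analytic on 𝔻. If lim_{|z|→1⁻} |g(z)| μ(z)/ν̃(z) = 0, where ν̃ is the associated weight of ν, then S_g : B^∞_ν → B^∞_μ is compact; conversely compactness of S_g implies this vanishing condition. (Compactness may be expressed via the sequential criterion: every bounded sequence in B^∞_ν converging to 0 uniformly on compacts is mapped to a norm-null sequence in B^∞_μ.) -/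
open Complex Metric Set Filter Real MeasureTheory

noncomputable section

lemma my_exists_primitive {H : ℂ → ℂ} (hH : DifferentiableOn ℂ H (Metric.ball (0:ℂ) 1)) :
    ∃ F : ℂ → ℂ, F 0 = 0 ∧ ∀ z ∈ Metric.ball (0:ℂ) 1, HasDerivAt F (H z) z := by
  have hb : ∀ r : NNReal, 0 < r → (r:ℝ) < 1 →
      HasFPowerSeriesOnBall H (cauchyPowerSeries H 0 r) 0 r := by
    intro r hr0 hr1
    exact (hH.mono (closedBall_subset_ball hr1)).hasFPowerSeriesOnBall hr0
  set p := cauchyPowerSeries H 0 (1/2 : NNReal) with hpdef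
  have hhalf : HasFPowerSeriesOnBall H p 0 ((1/2 : NNReal)) := hb _ (by norm_num) (by norm_num)
  have p_eq : ∀ r : NNReal, 0 < r → (r:ℝ) < 1 → cauchyPowerSeries H 0 r = p := fun r hr0 hr1 =>
    (hb r hr0 hr1).hasFPowerSeriesAt.eq_formalMultilinearSeries hhalf.hasFPowerSeriesAt
  have hball : ∀ r : NNReal, 0 < r → (r:ℝ) < 1 → HasFPowerSeriesOnBall H p 0 r := by
    intro r hr0 hr1
    rw [← p_eq r hr0 hr1]; exact hb r hr0 hr1
  have hrad : (1 : ENNReal) ≤ p.radius := by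
    refine ENNReal.le_of_forall_nnreal_lt fun r hr => ?_
    rcases eq_or_lt_of_le (show (0:NNReal) ≤ r from by positivity) with h | h
    · simp [← h]
    · have hr1 : (r : ℝ) < 1 := by exact_mod_cast hr
      exact (hball r h hr1).r_le
  set c : ℕ → ℂ := fun k => p.coeff k with hcdef
  have hsum : ∀ z : ℂ, ‖z‖ < 1 → HasSum (fun k => z ^ k * c k) (H z) := by
    intro z hz
    set rr : NNReal := ⟨(‖z‖ + 1) / 2, by positivity⟩ with hrrdef
    have hrr0 : 0 < rr := by
      rw [← NNReal.coe_lt_coe]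
      show (0:ℝ) < (‖z‖ + 1) / 2
      positivity
    have hrr1 : (rr : ℝ) < 1 := by
      show (‖z‖ + 1) / 2 < 1
      linarith
    have hzrr : ‖z‖ < (rr : ℝ) := by
      show ‖z‖ < (‖z‖ + 1) / 2
      linarith [norm_nonneg z]
    have hzb : z ∈ Metric.eball (0:ℂ) rr := by
      rw [Metric.mem_eball, edist_zero_right]
      exact_mod_cast hzrr
    have := (hball rr hrr0 hrr1).hasSum (y := z) hzb
    simp only [zero_add] at this
    have e : (fun k => z ^ k * c k) = fun n => p n fun _ => z := by
      funext k; rw [FormalMultilinearSeries.apply_eq_pow_smul_coeff, smul_eq_mul]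
    rw [e]; exact this
  have hsummable : ∀ r : ℝ, 0 ≤ r → r < 1 → Summable (fun k => ‖c k‖ * r ^ k) := by
    intro r hr0 hr1
    have h2 : r.toNNReal < 1 := by
      rw [← Real.toNNReal_one]
      exact (Real.toNNReal_lt_toNNReal_iff one_pos).mpr hr1
    have h1 : (r.toNNReal : ENNReal) < p.radius :=
      lt_of_lt_of_le (by exact_mod_cast h2) hrad
    have h3 := p.summable_norm_mul_pow h1
    have h4 : ((r.toNNReal : NNReal) : ℝ) = r := Real.coe_toNNReal r hr0
    convert h3 using 2 with k
    rw [FormalMultilinearSeries.norm_apply_eq_norm_coef, h4]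
  refine ⟨fun z => ∑' k, z ^ (k + 1) * (c k / (k + 1)), ?_, ?_⟩
  · show (∑' k : ℕ, (0:ℂ) ^ (k + 1) * (c k / (k + 1))) = 0
    have : (fun k : ℕ => (0:ℂ) ^ (k + 1) * (c k / (k + 1))) = fun _ => 0 := by
      funext k; simp
    rw [this, tsum_zero]
  · intro z₀ hz₀
    rw [mem_ball_zero_iff] at hz₀
    set r : ℝ := (‖z₀‖ + 1) / 2 with hrdef
    have hr0 : 0 < r := by positivity
    have hz₀r : ‖z₀‖ < r := by rw [hrdef]; linarith
    have hr1 : r < 1 := by rw [hrdef]; linarith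
    have key := hasDerivAt_tsum_of_isPreconnected
      (u := fun k => ‖c k‖ * r ^ k)
      (g := fun k z => z ^ (k + 1) * (c k / (k + 1)))
      (g' := fun k z => z ^ k * c k)
      (hsummable r hr0.le hr1) (isOpen_ball (x := (0:ℂ)) (ε := r))
      ((convex_ball (0:ℂ) r).isPreconnected)
      (y₀ := 0) (y := z₀)
      ?_ ?_ (by simpa using hr0) ?_ (by simpa using hz₀r)
    · have := hsum z₀ hz₀
      rwa [this.tsum_eq] at key
    · intro k y _
      have h1 : HasDerivAt (fun z : ℂ => z ^ (k + 1)) ((k + 1 : ℕ) * y ^ k) y := by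
        simpa using hasDerivAt_pow (k + 1) y
      have h2 := h1.mul_const (c k / (k + 1))
      refine h2.congr_deriv ?_
      have hk : ((k : ℂ) + 1) ≠ 0 := Nat.cast_add_one_ne_zero k
      push_cast
      field_simp
    · intro k y hy
      rw [mem_ball_zero_iff] at hy
      show ‖y ^ k * c k‖ ≤ ‖c k‖ * r ^ k
      rw [norm_mul, norm_pow, mul_comm]
      gcongr
    · show Summable fun k : ℕ => (0:ℂ) ^ (k + 1) * (c k / (k + 1))
      have : (fun k : ℕ => (0:ℂ) ^ (k + 1) * (c k / (k + 1))) = fun _ => 0 := by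
        funext k; simp
      rw [this]; exact summable_zero

def mySet (ν : ℂ → ℝ) (z : ℂ) : Set ℝ :=
  {a : ℝ | ∃ f : ℂ → ℂ, DifferentiableOn ℂ f (Metric.ball (0:ℂ) 1) ∧
      (∀ w ∈ Metric.ball (0:ℂ) 1, ν w * ‖f w‖ ≤ 1) ∧ a = ‖f z‖}

lemma assocWeight_eq (ν : ℂ → ℝ) (z : ℂ) : assocWeight ν z = (sSup (mySet ν z))⁻¹ := rfl

lemma weight_le_at_zero {ν : ℂ → ℝ} (hν : IsWeight ν) {z : ℂ}
    (hz : z ∈ Metric.ball (0:ℂ) 1) : ν z ≤ ν 0 := by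
  have h1 := hν.2.2.1 z
  have habs : ‖z‖ < 1 := by
    rwa [← mem_ball_zero_iff]
  have h2 := hν.2.2.2 0 (‖z‖) le_rfl (norm_nonneg z) habs
  rw [h1]
  simpa using h2

lemma mySet_bddAbove {ν : ℂ → ℝ} (hνpos : ∀ z ∈ Metric.ball (0:ℂ) 1, 0 < ν z) {z : ℂ}
    (hz : z ∈ Metric.ball (0:ℂ) 1) : BddAbove (mySet ν z) := by
  refine ⟨(ν z)⁻¹, fun a ha => ?_⟩
  obtain ⟨f, _, hb, rfl⟩ := ha
  rw [← one_div, le_div_iff₀ (hνpos z hz), mul_comm]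
  exact hb z hz

lemma mySet_sSup_pos {ν : ℂ → ℝ} (hν : IsWeight ν)
    (hνpos : ∀ z ∈ Metric.ball (0:ℂ) 1, 0 < ν z) {z : ℂ}
    (hz : z ∈ Metric.ball (0:ℂ) 1) : 0 < sSup (mySet ν z) := by
  have h0 : (0:ℂ) ∈ Metric.ball (0:ℂ) 1 := by simp
  have hν0 := hνpos 0 h0
  have hmem : (ν 0)⁻¹ ∈ mySet ν z := by
    refine ⟨fun _ => ((ν 0 : ℝ) : ℂ)⁻¹, differentiableOn_const _, fun w hw => ?_, ?_⟩
    · rw [norm_inv, Complex.norm_real, Real.norm_of_nonneg hν0.le, ← div_eq_mul_inv, div_le_one hν0]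
      exact weight_le_at_zero hν hw
    · rw [norm_inv, Complex.norm_real, Real.norm_of_nonneg hν0.le]
  exact lt_of_lt_of_le (inv_pos.mpr hν0) (le_csSup (mySet_bddAbove hνpos hz) hmem)

/-- `S_g : B^∞_ν → B^∞_μ` is compact (sequential criterion, through
`(S_g f)' = f'·g` and `S_g f (0) = 0`) iff `lim_{|z|→1⁻} |g(z)| μ(z)/ν̃(z) = 0`. -/
theorem stmt11 (ν μ : ℂ → ℝ) (g : ℂ → ℂ)
    (hν : IsWeight ν) (hμ : IsWeight μ)
    (hνpos : ∀ z ∈ Metric.ball (0:ℂ) 1, 0 < ν z)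
    (hμpos : ∀ z ∈ Metric.ball (0:ℂ) 1, 0 < μ z)
    (hg : DifferentiableOn ℂ g (Metric.ball (0:ℂ) 1)) :
    (∀ (f : ℕ → ℂ → ℂ) (W : ℝ),
      (∀ n, DifferentiableOn ℂ (f n) (Metric.ball (0:ℂ) 1)) →
      (∀ n, ‖f n 0‖ ≤ W ∧
        ∀ z ∈ Metric.ball (0:ℂ) 1, ν z * ‖deriv (f n) z‖ ≤ W) →
      (∀ K : Set ℂ, K ⊆ Metric.ball (0:ℂ) 1 → IsCompact K →
        TendstoUniformlyOn f 0 Filter.atTop K) →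
      ∀ ε > (0:ℝ), ∃ N : ℕ, ∀ n ≥ N, ∀ z ∈ Metric.ball (0:ℂ) 1,
        μ z * (‖deriv (f n) z‖ * ‖g z‖) ≤ ε)
    ↔ (∀ ε > (0:ℝ), ∃ r ∈ Set.Ico (0:ℝ) 1, ∀ z ∈ Metric.ball (0:ℂ) 1,
        r < ‖z‖ → ‖g z‖ * μ z / assocWeight ν z < ε) := by
  have h0D : (0:ℂ) ∈ Metric.ball (0:ℂ) 1 := by simp
  constructor
  · -- compactness implies the vanishing condition
    intro hcpt ε hε
    by_contra hcon
    push_neg at hcon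
    -- select bad points
    have hsel : ∀ n : ℕ, ∃ z ∈ Metric.ball (0:ℂ) 1,
        (1/2 : ℝ) ^ (((n:ℝ)+1)⁻¹) < ‖z‖ ∧
        ε ≤ ‖g z‖ * μ z / assocWeight ν z := by
      intro n
      refine hcon ((1/2 : ℝ) ^ (((n:ℝ)+1)⁻¹)) ⟨?_, ?_⟩
      · positivity
      · exact Real.rpow_lt_one (by norm_num) (by norm_num) (by positivity)
    choose zz hzD hzr hzε using hsel
    -- the powers are bounded below
    have habs : ∀ n : ℕ, (1/2 : ℝ) ≤ (‖zz n‖) ^ n := by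
      intro n
      have hexp : (n : ℝ) * ((n:ℝ)+1)⁻¹ ≤ 1 := by
        rw [← div_eq_mul_inv, div_le_one (by positivity)]
        linarith
      calc (1/2 : ℝ) = (1/2 : ℝ) ^ (1:ℝ) := (Real.rpow_one _).symm
        _ ≤ (1/2 : ℝ) ^ ((n:ℝ) * ((n:ℝ)+1)⁻¹) :=
            Real.rpow_le_rpow_of_exponent_ge (by norm_num) (by norm_num) hexp
        _ = ((1/2 : ℝ) ^ (((n:ℝ)+1)⁻¹)) ^ (n:ℕ) := by
            rw [← Real.rpow_natCast ((1/2 : ℝ) ^ (((n:ℝ)+1)⁻¹)) n,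
              ← Real.rpow_mul (by norm_num), mul_comm]
        _ ≤ (‖zz n‖) ^ n :=
            pow_le_pow_left₀ (Real.rpow_nonneg (by norm_num) _) (hzr n).le n
    -- pick near-extremal functions
    have hpick : ∀ n : ℕ, ∃ h : ℂ → ℂ, DifferentiableOn ℂ h (Metric.ball (0:ℂ) 1) ∧
        (∀ w ∈ Metric.ball (0:ℂ) 1, ν w * ‖h w‖ ≤ 1) ∧
        sSup (mySet ν (zz n)) / 2 < ‖h (zz n)‖ := by
      intro n
      have hpos := mySet_sSup_pos hν hνpos (hzD n)
      have hne : (mySet ν (zz n)).Nonempty :=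
        ⟨‖(fun _ : ℂ => (0:ℂ)) (zz n)‖, fun _ => 0, differentiableOn_const _,
          fun w _ => by simp, rfl⟩
      obtain ⟨a, haS, ha⟩ := exists_lt_of_lt_csSup hne (half_lt_self hpos)
      obtain ⟨h, h1, h2, hEq⟩ := haS
      exact ⟨h, h1, h2, by rwa [hEq] at ha⟩
    choose hh hhdiff hhbd hhlb using hpick
    -- primitives of hh n * z ^ n
    have hHdiff : ∀ n : ℕ, DifferentiableOn ℂ (fun w => hh n w * w ^ n)
        (Metric.ball (0:ℂ) 1) :=
      fun n => (hhdiff n).mul ((differentiable_pow n).differentiableOn)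
    choose F hF0 hFd using fun n => my_exists_primitive (hHdiff n)
    have hFderiv : ∀ n, ∀ z ∈ Metric.ball (0:ℂ) 1, deriv (F n) z = hh n z * z ^ n :=
      fun n z hz => (hFd n z hz).deriv
    -- apply the compactness criterion
    obtain ⟨N, hN⟩ := hcpt F 1
      (fun n z hz => ((hFd n z hz).differentiableAt).differentiableWithinAt)
      (fun n => ⟨by rw [hF0 n]; simp, fun z hz => by
        rw [hFderiv n z hz, norm_mul, norm_pow]
        have hb1 := hhbd n z hz
        have hzlt : ‖z‖ < 1 := by
          rwa [← mem_ball_zero_iff]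
        have hb2 : (‖z‖) ^ n ≤ 1 := pow_le_one₀ (norm_nonneg z) hzlt.le
        calc ν z * (‖hh n z‖ * (‖z‖) ^ n)
            = (ν z * ‖hh n z‖) * (‖z‖) ^ n := by ring
          _ ≤ 1 * 1 := mul_le_mul hb1 hb2 (pow_nonneg (norm_nonneg z) n) zero_le_one
          _ = 1 := by ring⟩)
      (by
        intro K hKD hK
        rcases K.eq_empty_or_nonempty with rfl | hKne
        · exact tendstoUniformlyOn_empty
        obtain ⟨w, hwK, hw⟩ := hK.exists_isMaxOn hKne continuous_norm.continuousOn
        set ρ : ℝ := ‖w‖ with hρdef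
        have hρ0 : 0 ≤ ρ := norm_nonneg w
        have hρ1 : ρ < 1 := mem_ball_zero_iff.mp (hKD hwK)
        have hKsub : K ⊆ Metric.closedBall (0:ℂ) ρ := fun x hx =>
          mem_closedBall_zero_iff.mpr (hw hx)
        have hCB : Metric.closedBall (0:ℂ) ρ ⊆ Metric.ball (0:ℂ) 1 :=
          closedBall_subset_ball hρ1
        obtain ⟨w0, hw0m, hw0⟩ := (isCompact_closedBall (0:ℂ) ρ).exists_isMinOn
          ⟨0, by simp [hρ0]⟩ (hν.1.mono hCB)
        have hm : 0 < ν w0 := hνpos w0 (hCB hw0m)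
        have hder : ∀ n : ℕ, ∀ x ∈ Metric.closedBall (0:ℂ) ρ,
            ‖hh n x * x ^ n‖ ≤ (ν w0)⁻¹ * ρ ^ n := by
          intro n x hx
          have hx1 := hCB hx
          have hbx : ‖hh n x‖ ≤ (ν w0)⁻¹ := by
            have h1 := hhbd n x hx1
            have h2 : ν w0 ≤ ν x := hw0 hx
            have h3 : 0 < ν x := hνpos x hx1
            rw [← one_div, le_div_iff₀ hm]
            calc ‖hh n x‖ * ν w0 ≤ ‖hh n x‖ * ν x :=
                  mul_le_mul_of_nonneg_left h2 (norm_nonneg _)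
              _ ≤ 1 := by rw [mul_comm]; exact h1
          rw [norm_mul, norm_pow]
          exact mul_le_mul hbx
            (pow_le_pow_left₀ (norm_nonneg x)
              (by exact mem_closedBall_zero_iff.mp hx) n)
            (pow_nonneg (norm_nonneg x) n) (inv_nonneg.mpr hm.le)
        have hFb : ∀ n : ℕ, ∀ x ∈ K, ‖F n x‖ ≤ ((ν w0)⁻¹ * ρ ^ n) * ρ := by
          intro n x hx
          have hmvt := (convex_closedBall (0:ℂ) ρ).norm_image_sub_le_of_norm_hasDerivWithin_le
            (f := F n) (f' := fun w => hh n w * w ^ n) (C := (ν w0)⁻¹ * ρ ^ n) (x := (0:ℂ)) (y := x)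
            (fun y hy => (hFd n y (hCB hy)).hasDerivWithinAt)
            (fun y hy => hder n y hy) (by simp [hρ0]) (hKsub hx)
          rw [hF0 n, sub_zero, sub_zero] at hmvt
          have hxρ : ‖x‖ ≤ ρ := mem_closedBall_zero_iff.mp (hKsub hx)
          have hC : 0 ≤ (ν w0)⁻¹ * ρ ^ n := by positivity
          have h2 : ((ν w0)⁻¹ * ρ ^ n) * ‖x‖ ≤ ((ν w0)⁻¹ * ρ ^ n) * ρ :=
            mul_le_mul_of_nonneg_left hxρ hC
          exact le_trans hmvt h2
        rw [Metric.tendstoUniformlyOn_iff]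
        intro δ hδ
        have htend : Tendsto (fun n : ℕ => ((ν w0)⁻¹ * ρ ^ n) * ρ) atTop (nhds 0) := by
          have h1 := tendsto_pow_atTop_nhds_zero_of_lt_one hρ0 hρ1
          have h2 := (h1.const_mul ((ν w0)⁻¹)).mul_const ρ
          simpa using h2
        filter_upwards [htend.eventually_lt_const hδ] with n hn x hx
        have := lt_of_le_of_lt (hFb n x hx) hn
        rw [Pi.zero_apply, dist_zero_left]
        exact this)
      (ε/8) (by linarith)
    -- contradiction at zz N
    have h1 := hN N le_rfl (zz N) (hzD N)
    have hs := mySet_sSup_pos hν hνpos (hzD N)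
    set s := sSup (mySet ν (zz N)) with hsdef
    have hε2 : ε ≤ ‖g (zz N)‖ * μ (zz N) * s := by
      have := hzε N
      rwa [assocWeight_eq, div_inv_eq_mul] at this
    have hdval : ‖deriv (F N) (zz N)‖
        = ‖hh N (zz N)‖ * (‖zz N‖) ^ N := by
      rw [hFderiv N (zz N) (hzD N), norm_mul, norm_pow]
    have hd4 : s/4 ≤ ‖deriv (F N) (zz N)‖ := by
      rw [hdval]
      have hb := (hhlb N).le
      have hp := habs N
      nlinarith [norm_nonneg (hh N (zz N)),
        pow_nonneg (norm_nonneg (zz N)) N]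
    have hμ0 : 0 ≤ μ (zz N) := (hμpos _ (hzD N)).le
    have hg0 : 0 ≤ ‖g (zz N)‖ := norm_nonneg _
    have hfinal : ε/4 ≤ μ (zz N) * (‖deriv (F N) (zz N)‖ * ‖g (zz N)‖) := by
      have hstep : μ (zz N) * ((s/4) * ‖g (zz N)‖)
          ≤ μ (zz N) * (‖deriv (F N) (zz N)‖ * ‖g (zz N)‖) :=
        mul_le_mul_of_nonneg_left (mul_le_mul_of_nonneg_right hd4 hg0) hμ0
      nlinarith
    linarith
  · -- the vanishing condition implies compactness
    intro hvan f W hdiff hbnd hunif ε hε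
    set W' := max W 1 with hW'def
    have hW1 : (1:ℝ) ≤ W' := le_max_right _ _
    have hW0 : (0:ℝ) < W' := lt_of_lt_of_le one_pos hW1
    have hWle : W ≤ W' := le_max_left _ _
    obtain ⟨r, ⟨hr0, hr1⟩, hr⟩ := hvan (ε/(2*W')) (by positivity)
    have hKsub : Metric.closedBall (0:ℂ) r ⊆ Metric.ball (0:ℂ) 1 := closedBall_subset_ball hr1
    -- derivatives converge uniformly on the closed ball
    have hlu : TendstoLocallyUniformlyOn f 0 atTop (Metric.ball (0:ℂ) 1) :=
      (tendstoLocallyUniformlyOn_iff_forall_isCompact isOpen_ball).mpr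
        (fun K hK hKc => hunif K hK hKc)
    have hlu' := hlu.deriv (Eventually.of_forall hdiff) isOpen_ball
    have hud := (tendstoLocallyUniformlyOn_iff_forall_isCompact isOpen_ball).mp hlu'
      _ hKsub (isCompact_closedBall _ _)
    -- bound for g on the closed ball
    obtain ⟨G0, hG0⟩ := (isCompact_closedBall (0:ℂ) r).exists_bound_of_continuousOn
      (hg.continuousOn.mono hKsub)
    set G := max G0 0 with hGdef
    have hG : 0 ≤ G := le_max_right _ _
    have hGb : ∀ z ∈ Metric.closedBall (0:ℂ) r, ‖g z‖ ≤ G := fun z hz => by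
      exact le_trans (hG0 z hz) (le_max_left _ _)
    set M := μ 0 with hMdef
    have hM : 0 < M := hμpos 0 h0D
    set ε' := ε/(M*G+1) with hε'def
    have hMG : 0 < M*G+1 := by nlinarith
    have hε'pos : 0 < ε' := div_pos hε hMG
    rw [Metric.tendstoUniformlyOn_iff] at hud
    obtain ⟨N, hN⟩ := eventually_atTop.mp (hud ε' hε'pos)
    refine ⟨N, fun n hn z hz => ?_⟩
    have hzlt : ‖z‖ < 1 := by
      rwa [← mem_ball_zero_iff]
    have hgz : 0 ≤ ‖g z‖ := norm_nonneg _
    have hμz : 0 ≤ μ z := (hμpos z hz).le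
    rcases le_or_gt (‖z‖) r with hcase | hcase
    · -- compact part
      have hzK : z ∈ Metric.closedBall (0:ℂ) r := by
        rw [mem_closedBall_zero_iff]
        exact hcase
      have hdz : ‖deriv (f n) z‖ ≤ ε' := by
        have hd := hN n hn z hzK
        have h0 : deriv (0 : ℂ → ℂ) z = 0 := by
          have : (0 : ℂ → ℂ) = fun _ => (0:ℂ) := rfl
          rw [this, deriv_const]
        rw [Function.comp_apply, h0, dist_zero_left] at hd
        exact hd.le
      have hμzM : μ z ≤ M := weight_le_at_zero hμ hz
      have hchain : μ z * (‖deriv (f n) z‖ * ‖g z‖) ≤ M * (ε' * G) :=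
        mul_le_mul hμzM (mul_le_mul hdz (hGb z hzK) hgz hε'pos.le)
          (mul_nonneg (norm_nonneg _) hgz) hM.le
      have hlast : M * (ε' * G) ≤ ε := by
        rw [hε'def]
        rw [div_mul_eq_mul_div, mul_div_assoc', div_le_iff₀ hMG]
        nlinarith
      linarith
    · -- outer part
      have hless := hr z hz hcase
      rw [assocWeight_eq, div_inv_eq_mul] at hless
      set s := sSup (mySet ν z) with hsdef
      have hs0 : 0 < s := mySet_sSup_pos hν hνpos hz
      have hkey : ‖deriv (f n) z‖ ≤ W' * s := by
        have hmem : ‖deriv (f n) z‖ / W' ∈ mySet ν z := by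
          refine ⟨fun w => deriv (f n) w / ((W' : ℝ) : ℂ), ?_, ?_, ?_⟩
          · exact (((hdiff n).analyticOnNhd isOpen_ball).deriv.differentiableOn).div_const _
          · intro w hw
            rw [norm_div, Complex.norm_real, Real.norm_of_nonneg hW0.le, ← mul_div_assoc,
              div_le_one hW0]
            exact le_trans ((hbnd n).2 w hw) hWle
          · rw [norm_div, Complex.norm_real, Real.norm_of_nonneg hW0.le]
        have hle := le_csSup (mySet_bddAbove hνpos hz) hmem
        rw [div_le_iff₀ hW0] at hle
        rw [mul_comm] at hle
        exact hle
      have hchain : μ z * (‖deriv (f n) z‖ * ‖g z‖)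
          ≤ W' * (‖g z‖ * μ z * s) := by
        calc μ z * (‖deriv (f n) z‖ * ‖g z‖)
            = (‖g z‖ * μ z) * ‖deriv (f n) z‖ := by ring
          _ ≤ (‖g z‖ * μ z) * (W' * s) :=
              mul_le_mul_of_nonneg_left hkey (mul_nonneg hgz hμz)
          _ = W' * (‖g z‖ * μ z * s) := by ring
      have hstep : W' * (‖g z‖ * μ z * s) ≤ W' * (ε/(2*W')) :=
        mul_le_mul_of_nonneg_left hless.le hW0.le
      have heq : W' * (ε/(2*W')) = ε/2 := by
        field_simp
      linarith
end
end

section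
/- Let ν and μ be typical weights (ν(z) → 0 and μ(z) → 0 as |z| → 1⁻) and g analytic on 𝔻. If S_g : H^∞_ν → H^∞_μ is bounded and g satisfies sup_z (μ(z)/ν(z))|g(z)| < ∞ with ν satisfying the derivative estimate of property (U), then S_g maps H^0_ν into H^0_μ boundedly: for every f with ν(z)|f(z)| → 0 as |z| → 1⁻, also μ(z)|S_g f(z)| → 0 as |z| → 1⁻, given that polynomials are dense in H^0_ν and H^0_μ is closed in H^∞_μ. -/
open Complex Metric Set Filter Real MeasureTheory intervalIntegral

set_option maxHeartbeats 1000000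

noncomputable section

/-- The map `t ↦ tz` sends `[0,1]` into the unit ball when `z` is in the unit ball. -/
lemma mapsTo_aux {z : ℂ} (hz : z ∈ Metric.ball (0:ℂ) 1) :
    Set.MapsTo (fun t : ℝ => (t:ℂ) * z) (Set.uIcc (0:ℝ) 1) (Metric.ball (0:ℂ) 1) := by
  intro t ht
  rw [Set.uIcc_of_le zero_le_one, Set.mem_Icc] at ht
  rw [mem_ball, dist_zero_right] at hz ⊢
  rw [norm_mul, Complex.norm_real, Real.norm_eq_abs, _root_.abs_of_nonneg ht.1]
  nlinarith [norm_nonneg z]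

/-- Continuity of the integrand of `Sg`. -/
lemma contOn_integrand {f g : ℂ → ℂ} (hf : DifferentiableOn ℂ f (Metric.ball (0:ℂ) 1))
    (hg : DifferentiableOn ℂ g (Metric.ball (0:ℂ) 1)) {z : ℂ} (hz : z ∈ Metric.ball (0:ℂ) 1) :
    ContinuousOn (fun t : ℝ => deriv f ((t:ℂ) * z) * g ((t:ℂ) * z)) (Set.uIcc (0:ℝ) 1) := by
  have hct : ContinuousOn (fun t : ℝ => (t:ℂ) * z) (Set.uIcc (0:ℝ) 1) :=
    (Complex.continuous_ofReal.mul continuous_const).continuousOn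
  have hdf : ContinuousOn (deriv f) (Metric.ball (0:ℂ) 1) :=
    ((hf.analyticOnNhd isOpen_ball).deriv).continuousOn
  exact (hdf.comp hct (mapsTo_aux hz)).mul (hg.continuousOn.comp hct (mapsTo_aux hz))

/-- If `S_g : H^∞_ν → H^∞_μ` is bounded, `sup (μ/ν)|g| < ∞`, `ν` satisfies the property (U)
derivative estimate, and polynomials are dense in `H^0_ν`, then `S_g` maps `H^0_ν` into
`H^0_μ`. -/
theorem stmt19 (ν μ : ℂ → ℝ) (g : ℂ → ℂ) (M B : ℝ)
    (hν : IsWeight ν) (hμ : IsWeight μ)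
    (hνtyp : IsTypical ν) (hμtyp : IsTypical μ)
    (hνpos : ∀ z ∈ Metric.ball (0:ℂ) 1, 0 < ν z)
    (hg : DifferentiableOn ℂ g (Metric.ball (0:ℂ) 1))
    -- boundedness of S_g : H^∞_ν → H^∞_μ with bound M
    (hbdd : ∀ f : ℂ → ℂ, DifferentiableOn ℂ f (Metric.ball (0:ℂ) 1) →
      ∀ C : ℝ, (∀ z ∈ Metric.ball (0:ℂ) 1, ν z * ‖f z‖ ≤ C) →
      ∀ z ∈ Metric.ball (0:ℂ) 1, μ z * ‖Sg g f z‖ ≤ M * C)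
    -- sup (μ/ν)|g| ≤ B
    (hgB : ∀ z ∈ Metric.ball (0:ℂ) 1, μ z / ν z * ‖g z‖ ≤ B)
    -- property (U) derivative estimate for ν
    (hU : ∃ Cν : ℝ, 0 < Cν ∧ ∀ f : ℂ → ℂ, DifferentiableOn ℂ f (Metric.ball (0:ℂ) 1) →
      ∀ C : ℝ, (∀ z ∈ Metric.ball (0:ℂ) 1, ν z * ‖f z‖ ≤ C) →
      ∀ z ∈ Metric.ball (0:ℂ) 1,
        ‖deriv f z‖ ≤ Cν * C / (ν z * (1 - ‖z‖ ^ 2)))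
    -- density of polynomials in H^0_ν
    (hdense : ∀ f : ℂ → ℂ, DifferentiableOn ℂ f (Metric.ball (0:ℂ) 1) →
      VanishesAtBoundary ν f → ∀ ε > (0:ℝ), ∃ p : Polynomial ℂ,
        ∀ z ∈ Metric.ball (0:ℂ) 1, ν z * ‖f z - p.eval z‖ ≤ ε) :
    ∀ f : ℂ → ℂ, DifferentiableOn ℂ f (Metric.ball (0:ℂ) 1) →
      VanishesAtBoundary ν f → VanishesAtBoundary μ (Sg g f) := by
  intro f hf hfvan ε hε
  have h01 : (0:ℂ) ∈ Metric.ball (0:ℂ) 1 := by simp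
  -- B is nonnegative
  have hB : 0 ≤ B := le_trans (mul_nonneg (div_nonneg (hμ.2.1 0 h01) (le_of_lt (hνpos 0 h01))) (norm_nonneg _)) (hgB 0 h01)
  -- choose a polynomial p with ‖f - p‖_ν ≤ δ
  set δ : ℝ := ε / (4 * (|M| + 1)) with hδdef
  have hδ : 0 < δ := by positivity
  obtain ⟨p, hp⟩ := hdense f hf hfvan δ hδ
  set P : ℂ → ℂ := fun w => p.eval w with hPdef
  have hPdiff : DifferentiableOn ℂ P (Metric.ball (0:ℂ) 1) := p.differentiable.differentiableOn
  -- bound K on |p'| over the closed unit disk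
  obtain ⟨K₀, hK₀⟩ := (isCompact_closedBall (0:ℂ) 1).exists_bound_of_continuousOn
    (p.derivative.continuous.continuousOn (s := Metric.closedBall (0:ℂ) 1))
  set K : ℝ := max K₀ 0 with hKdef
  have hK : ∀ w ∈ Metric.closedBall (0:ℂ) 1, ‖p.derivative.eval w‖ ≤ K := by
    intro w hw
    calc ‖p.derivative.eval w‖ = ‖p.derivative.eval w‖ := rfl
      _ ≤ K₀ := hK₀ w hw
      _ ≤ K := le_max_left _ _
  have hKnn : 0 ≤ K := le_max_right _ _
  -- choose r₁ from ν-typicality for ε'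
  set ε' : ℝ := ε / (4 * (K + 1) * (B + 1)) with hε'def
  have hε' : 0 < ε' := by positivity
  obtain ⟨r₁, hr₁, hr₁ν⟩ := hνtyp ε' hε'
  set t₀ : ℝ := (1 + r₁) / 2 with ht₀def
  have ht₀pos : 0 < t₀ := by simp only [ht₀def]; linarith [hr₁.1]
  have ht₀lt : t₀ < 1 := by simp only [ht₀def]; linarith [hr₁.2]
  have hr₁t₀ : r₁ < t₀ := by simp only [ht₀def]; linarith [hr₁.2]
  -- bound G on |g| over the closed disk of radius t₀
  have hsub : Metric.closedBall (0:ℂ) t₀ ⊆ Metric.ball (0:ℂ) 1 :=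
    Metric.closedBall_subset_ball ht₀lt
  obtain ⟨G₀, hG₀⟩ := (isCompact_closedBall (0:ℂ) t₀).exists_bound_of_continuousOn
    (hg.continuousOn.mono hsub)
  set G : ℝ := max G₀ 0 with hGdef
  have hG : ∀ w ∈ Metric.closedBall (0:ℂ) t₀, ‖g w‖ ≤ G :=
    fun w hw => le_trans (hG₀ w hw) (le_max_left _ _)
  have hGnn : 0 ≤ G := le_max_right _ _
  -- choose r₂ from μ-typicality
  set εμ : ℝ := ε / (4 * (K + 1) * (G + 1)) with hεμdef
  have hεμ : 0 < εμ := by positivity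
  obtain ⟨r₂, hr₂, hr₂μ⟩ := hμtyp εμ hεμ
  -- final radius
  refine ⟨max r₂ (r₁ / t₀), ⟨le_trans hr₂.1 (le_max_left _ _), ?_⟩, ?_⟩
  · rw [max_lt_iff]
    exact ⟨hr₂.2, by rw [div_lt_one ht₀pos]; exact hr₁t₀⟩
  intro z hz hrz
  have hzn : ‖z‖ < 1 := by rwa [mem_ball, dist_zero_right] at hz
  have hznn : 0 ≤ ‖z‖ := norm_nonneg z
  have hzr₂ : r₂ < ‖z‖ := lt_of_le_of_lt (le_max_left _ _) hrz
  have hzr₁ : r₁ < t₀ * ‖z‖ := by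
    have := lt_of_le_of_lt (le_max_right _ _) hrz
    rw [div_lt_iff₀ ht₀pos] at this; linarith
  have hμznn : 0 ≤ μ z := hμ.2.1 z hz
  -- integrands
  set If : ℝ → ℂ := fun t => deriv f ((t:ℂ) * z) * g ((t:ℂ) * z) with hIfdef
  set Ip : ℝ → ℂ := fun t => deriv P ((t:ℂ) * z) * g ((t:ℂ) * z) with hIpdef
  have hintf : IntervalIntegrable If volume 0 1 :=
    (contOn_integrand hf hg hz).intervalIntegrable
  have hintp : IntervalIntegrable Ip volume 0 1 :=
    (contOn_integrand hPdiff hg hz).intervalIntegrable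
  -- decomposition : Sg g f z = Sg g (f - P) z + Sg g P z
  have hdecomp : Sg g f z = Sg g (fun w => f w - P w) z + Sg g P z := by
    simp only [Sg]
    have heq : ∀ t ∈ Set.uIcc (0:ℝ) 1,
        deriv (fun w => f w - P w) ((t:ℂ) * z) * g ((t:ℂ) * z) = If t - Ip t := by
      intro t ht
      have htz : (t:ℂ) * z ∈ Metric.ball (0:ℂ) 1 := mapsTo_aux hz ht
      have hfd : DifferentiableAt ℂ f ((t:ℂ) * z) :=
        hf.differentiableAt (isOpen_ball.mem_nhds htz)
      rw [deriv_fun_sub hfd (p.differentiable.differentiableAt)]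
      simp only [hIfdef, hIpdef]; ring
    rw [intervalIntegral.integral_congr heq, intervalIntegral.integral_sub hintf hintp]
    ring
  -- bound on the (f - P) part
  have hfP : μ z * ‖Sg g (fun w => f w - P w) z‖ ≤ ε / 4 := by
    have h1 := hbdd (fun w => f w - P w) (hf.sub hPdiff) δ hp z hz
    have h2 : M * δ ≤ ε / 4 := by
      have hM : M ≤ |M| := le_abs_self M
      have : M * δ ≤ (|M| + 1) * δ := by nlinarith
      calc M * δ ≤ (|M| + 1) * δ := this
        _ = ε / 4 := by rw [hδdef]; field_simp
    linarith
  -- bounds on the split of Sg g P z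
  have hintp₁ : IntervalIntegrable Ip volume 0 t₀ := by
    apply hintp.mono_set
    rw [Set.uIcc_of_le (le_of_lt ht₀pos), Set.uIcc_of_le zero_le_one]
    exact Set.Icc_subset_Icc le_rfl (le_of_lt ht₀lt)
  have hintp₂ : IntervalIntegrable Ip volume t₀ 1 := by
    apply hintp.mono_set
    rw [Set.uIcc_of_le (le_of_lt ht₀lt), Set.uIcc_of_le zero_le_one]
    exact Set.Icc_subset_Icc (le_of_lt ht₀pos) le_rfl
  have hsplit : (∫ t in (0:ℝ)..1, Ip t) = (∫ t in (0:ℝ)..t₀, Ip t) + ∫ t in t₀..1, Ip t :=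
    (intervalIntegral.integral_add_adjacent_intervals hintp₁ hintp₂).symm
  -- first part: for t ∈ [0, t₀], tz stays in the compact disk of radius t₀
  have hbound1 : ‖∫ t in (0:ℝ)..t₀, Ip t‖ ≤ K * G * t₀ := by
    have h := intervalIntegral.norm_integral_le_of_norm_le_const (C := K * G) (f := Ip)
      (a := 0) (b := t₀) ?_
    · calc ‖∫ t in (0:ℝ)..t₀, Ip t‖ ≤ K * G * |t₀ - 0| := h
        _ = K * G * t₀ := by rw [sub_zero, _root_.abs_of_pos ht₀pos]
    · intro t ht
      rw [Set.uIoc_of_le (le_of_lt ht₀pos), Set.mem_Ioc] at ht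
      have htz : (t:ℂ) * z ∈ Metric.closedBall (0:ℂ) t₀ := by
        rw [Metric.mem_closedBall, dist_zero_right, norm_mul, Complex.norm_real,
          Real.norm_eq_abs, _root_.abs_of_pos ht.1]
        have hzn' : ‖z‖ < 1 := by exact hzn
        calc t * ‖z‖ ≤ t * 1 := by nlinarith [norm_nonneg z, ht.1]
          _ ≤ t₀ := by linarith [ht.2]
      have hderivP : deriv P ((t:ℂ) * z) = p.derivative.eval ((t:ℂ) * z) := by
        rw [hPdef]; exact Polynomial.deriv p
      rw [hIpdef]
      simp only [norm_mul, hderivP]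
      exact mul_le_mul (hK _ (Metric.closedBall_subset_closedBall
        (le_of_lt ht₀lt) htz)) (hG _ htz) (norm_nonneg _) hKnn
  -- second part: for t ∈ [t₀, 1], use μ(z) ≤ μ(tz) ≤ B ν(tz)/|g| and ν(tz) < ε'
  have hbound2 : μ z * ‖∫ t in t₀..1, Ip t‖ ≤ K * B * ε' := by
    have hsmul : (μ z) • (∫ t in t₀..1, Ip t) = ∫ t in t₀..1, (μ z) • Ip t :=
      (intervalIntegral.integral_smul (μ z) Ip).symm
    have h := intervalIntegral.norm_integral_le_of_norm_le_const (C := K * B * ε')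
      (f := fun t => (μ z) • Ip t) (a := t₀) (b := 1) ?_
    · have : ‖(μ z) • (∫ t in t₀..1, Ip t)‖ ≤ K * B * ε' * |1 - t₀| := by rw [hsmul]; exact h
      rw [norm_smul, Real.norm_eq_abs, _root_.abs_of_nonneg hμznn] at this
      calc μ z * ‖∫ t in t₀..1, Ip t‖ ≤ K * B * ε' * |1 - t₀| := this
        _ ≤ K * B * ε' * 1 := by
            apply mul_le_mul_of_nonneg_left _ (by positivity)
            rw [_root_.abs_of_nonneg (by linarith : (0:ℝ) ≤ 1 - t₀)]; linarith
        _ = K * B * ε' := mul_one _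
    · intro t ht
      rw [Set.uIoc_of_le (le_of_lt ht₀lt), Set.mem_Ioc] at ht
      have htpos : 0 < t := lt_trans ht₀pos ht.1
      have htz1 : ‖(t:ℂ) * z‖ = t * ‖z‖ := by
        rw [norm_mul, Complex.norm_real, Real.norm_eq_abs, _root_.abs_of_pos htpos]
      have htzball : (t:ℂ) * z ∈ Metric.ball (0:ℂ) 1 := by
        rw [mem_ball, dist_zero_right, htz1]
        nlinarith [ht.2]
      have htzcb : (t:ℂ) * z ∈ Metric.closedBall (0:ℂ) 1 := by
        rw [Metric.mem_closedBall, dist_zero_right, htz1]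
        nlinarith [ht.2]
      -- μ z ≤ μ (tz) by radiality and monotonicity
      have hmono : μ z ≤ μ ((t:ℂ) * z) := by
        have h1 := hμ.2.2.1 z
        have h2 := hμ.2.2.1 ((t:ℂ) * z)
        have h3 := hμ.2.2.2 (t * ‖z‖) (‖z‖)
          (by positivity) (by nlinarith [ht.2]) hzn
        rw [h1, h2, htz1]
        exact h3
      -- μ(tz)|g(tz)| ≤ B ν(tz)
      have hνtz : 0 < ν ((t:ℂ) * z) := hνpos _ htzball
      have hgtz : μ ((t:ℂ) * z) * ‖g ((t:ℂ) * z)‖ ≤ B * ν ((t:ℂ) * z) := by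
        have := hgB _ htzball
        rw [div_mul_eq_mul_div, div_le_iff₀ hνtz] at this
        linarith
      -- ν(tz) < ε'
      have hνsmall : ν ((t:ℂ) * z) < ε' := by
        apply hr₁ν _ htzball
        rw [htz1]
        calc r₁ < t₀ * ‖z‖ := hzr₁
          _ ≤ t * ‖z‖ := by nlinarith [ht.1]
      -- assemble
      have hderivP : deriv P ((t:ℂ) * z) = p.derivative.eval ((t:ℂ) * z) := by
        rw [hPdef]; exact Polynomial.deriv p
      rw [norm_smul, Real.norm_eq_abs, _root_.abs_of_nonneg hμznn, hIpdef]
      simp only [norm_mul, hderivP]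
      have hKp : ‖p.derivative.eval ((t:ℂ) * z)‖ ≤ K := hK _ htzcb
      calc μ z * (‖p.derivative.eval ((t:ℂ) * z)‖ * ‖g ((t:ℂ) * z)‖)
          ≤ ‖p.derivative.eval ((t:ℂ) * z)‖ *
            (μ ((t:ℂ) * z) * ‖g ((t:ℂ) * z)‖) := by
            have hgnn := norm_nonneg (g ((t:ℂ) * z))
            have hpnn := norm_nonneg (p.derivative.eval ((t:ℂ) * z))
            nlinarith [mul_nonneg (mul_nonneg hpnn hgnn) (sub_nonneg.mpr hmono)]
        _ ≤ K * (B * ν ((t:ℂ) * z)) := by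
            apply mul_le_mul hKp hgtz _ hKnn
            exact mul_nonneg (hμ.2.1 _ htzball) (norm_nonneg _)
        _ ≤ K * B * ε' := by
            rw [mul_assoc]
            apply mul_le_mul_of_nonneg_left _ hKnn
            exact mul_le_mul_of_nonneg_left (le_of_lt hνsmall) hB
  -- bound on Sg g P z
  have hμzsmall : μ z < εμ := hr₂μ z hz hzr₂
  have hP : μ z * ‖Sg g P z‖ ≤ ε / 4 + ε / 4 := by
    have habs : ‖Sg g P z‖ ≤
        ‖∫ t in (0:ℝ)..t₀, Ip t‖ + ‖∫ t in t₀..1, Ip t‖ := by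
      rw [Sg, hsplit]
      calc ‖z * ((∫ t in (0:ℝ)..t₀, Ip t) + ∫ t in t₀..1, Ip t)‖
          = ‖z‖ * ‖(∫ t in (0:ℝ)..t₀, Ip t) + ∫ t in t₀..1, Ip t‖ :=
            norm_mul _ _
        _ ≤ 1 * ‖(∫ t in (0:ℝ)..t₀, Ip t) + ∫ t in t₀..1, Ip t‖ := by
            apply mul_le_mul_of_nonneg_right (le_of_lt hzn) (norm_nonneg _)
        _ = ‖(∫ t in (0:ℝ)..t₀, Ip t) + ∫ t in t₀..1, Ip t‖ := one_mul _
        _ ≤ _ := by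
            exact norm_add_le _ _
    have h1 : μ z * ‖∫ t in (0:ℝ)..t₀, Ip t‖ ≤ ε / 4 := by
      calc μ z * ‖∫ t in (0:ℝ)..t₀, Ip t‖ ≤ μ z * (K * G * t₀) :=
            mul_le_mul_of_nonneg_left hbound1 hμznn
        _ ≤ μ z * (K * G) := by
            apply mul_le_mul_of_nonneg_left _ hμznn
            nlinarith [mul_nonneg hKnn hGnn]
        _ ≤ εμ * (K * G) :=
            mul_le_mul_of_nonneg_right (le_of_lt hμzsmall) (mul_nonneg hKnn hGnn)
        _ ≤ (K + 1) * (G + 1) * εμ := by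
            nlinarith [mul_nonneg hKnn hεμ.le, mul_nonneg hGnn hεμ.le, hεμ.le]
        _ = ε / 4 := by rw [hεμdef]; field_simp
    have h2 : μ z * ‖∫ t in t₀..1, Ip t‖ ≤ ε / 4 := by
      calc μ z * ‖∫ t in t₀..1, Ip t‖ ≤ K * B * ε' := hbound2
        _ ≤ (K + 1) * (B + 1) * ε' := by
            nlinarith [mul_nonneg hKnn hε'.le, mul_nonneg hB hε'.le, hε'.le]
        _ = ε / 4 := by rw [hε'def]; field_simp
    nlinarith [norm_nonneg (∫ t in (0:ℝ)..t₀, Ip t), norm_nonneg (∫ t in t₀..1, Ip t)]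
  -- conclude
  calc μ z * ‖Sg g f z‖
      = μ z * ‖Sg g (fun w => f w - P w) z + Sg g P z‖ := by rw [hdecomp]
    _ ≤ μ z * (‖Sg g (fun w => f w - P w) z‖ + ‖Sg g P z‖) := by
        apply mul_le_mul_of_nonneg_left _ hμznn
        exact norm_add_le _ _
    _ = μ z * ‖Sg g (fun w => f w - P w) z‖ + μ z * ‖Sg g P z‖ := by
        ring
    _ ≤ ε / 4 + (ε / 4 + ε / 4) := add_le_add hfP hP
    _ < ε := by linarith
end
end
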